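/- arXiv:1603.01467 — 5 statements merged into one kernel-verified Lean document; each statement's English description precedes it below -/
import Mathlib

section
/- Let μ be a doubling measure on ℝ^d whose topological support J is hyperplane diffuse. Then μ is absolutely decaying: there exist C, α, r₀ > 0 such that for all x ∈ J, 0 < r ≤ r₀, β > 0, and every affine hyperplane L ⊆ ℝ^d, one has μ(N(L, βr) ∩ B(x,r)) ≤ C·β^α·μ(B(x,r)). -/
open Metric MeasureTheory NNReal ENNReal


lemma aux_compl_supp_null {X : Type*} [MetricSpace X] [SecondCountableTopology X]
    [MeasurableSpace X] (μ : Measure X) :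
    μ {x | ∀ r > (0:ℝ), 0 < μ (ball x r)}ᶜ = 0 := by
  set U : Set X := {x | ∀ r > (0:ℝ), 0 < μ (ball x r)}ᶜ with hU
  have h : ∀ x : U, ∃ r : ℝ, 0 < r ∧ μ (ball (x:X) r) = 0 := by
    rintro ⟨x, hx⟩
    simp only [hU, Set.mem_compl_iff, Set.mem_setOf_eq] at hx
    push_neg at hx
    obtain ⟨r, hr, hr0⟩ := hx
    exact ⟨r, hr, le_antisymm hr0 bot_le⟩
  choose rad hrad hnull using h
  have hsub : U ⊆ ⋃ u : U, ball (u:X) (rad u) := fun x hx =>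
    Set.mem_iUnion.2 ⟨⟨x, hx⟩, mem_ball_self (hrad ⟨x, hx⟩)⟩
  obtain ⟨T, hTc, hTU⟩ := TopologicalSpace.isOpen_iUnion_countable
    (fun u : U => ball (u:X) (rad u)) (fun u => isOpen_ball)
  have : μ (⋃ u ∈ T, ball (u:U) (rad u)) = 0 :=
    (measure_biUnion_null_iff hTc).2 fun u _ => hnull u
  refine le_antisymm ?_ bot_le
  calc μ U ≤ μ (⋃ u ∈ T, ball (u:U) (rad u)) := by
        rw [hTU]; exact measure_mono hsub
    _ = 0 := this

lemma aux_doubling_pow {X : Type*} [MetricSpace X] [MeasurableSpace X]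
    (μ : Measure X) (J : Set X) (C : ℝ≥0)
    (hdoub : ∀ x ∈ J, ∀ r > (0:ℝ), μ (ball x (2 * r)) ≤ (C:ℝ≥0∞) * μ (ball x r))
    (m : ℕ) : ∀ x ∈ J, ∀ r > (0:ℝ), μ (ball x (2^m * r)) ≤ (C:ℝ≥0∞)^m * μ (ball x r) := by
  induction m with
  | zero => intro x _ r _; simp
  | succ n ih =>
    intro x hx r hr
    have h1 : (2:ℝ)^(n+1) * r = 2 * (2^n * r) := by ring
    calc μ (ball x (2^(n+1) * r)) = μ (ball x (2 * (2^n * r))) := by rw [h1]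
      _ ≤ (C:ℝ≥0∞) * μ (ball x (2^n * r)) :=
          hdoub x hx _ (by positivity)
      _ ≤ (C:ℝ≥0∞) * ((C:ℝ≥0∞)^n * μ (ball x r)) := by
          exact mul_le_mul_right (ih x hx r hr) _
      _ = (C:ℝ≥0∞)^(n+1) * μ (ball x r) := by ring

lemma aux_greedy {X : Type*} [MetricSpace X] (δ : ℝ) (hδ : 0 < δ) (t₀ : Finset X) :
    ∃ t : Finset X, t ⊆ t₀ ∧ (∀ a ∈ t, ∀ b ∈ t, a ≠ b → δ ≤ dist a b) ∧
      ∀ y ∈ t₀, ∃ z ∈ t, dist y z < δ := by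
  classical
  induction t₀ using Finset.strongInduction with
  | _ t₀ ih =>
    rcases t₀.eq_empty_or_nonempty with rfl | ⟨a, ha⟩
    · exact ⟨∅, Finset.Subset.refl _, by simp, by simp⟩
    · set t₁ := t₀.filter (fun y => δ ≤ dist y a) with ht₁
      have hat₁ : a ∉ t₁ := by
        simp only [ht₁, Finset.mem_filter, not_and, not_le]
        intro _
        simp [dist_self, hδ]
      have hss : t₁ ⊂ t₀ :=
        Finset.ssubset_iff_of_subset (Finset.filter_subset _ _) |>.2 ⟨a, ha, hat₁⟩
      obtain ⟨t', ht'sub, ht'sep, ht'cov⟩ := ih t₁ hss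
      refine ⟨insert a t', ?_, ?_, ?_⟩
      · intro y hy
        rcases Finset.mem_insert.1 hy with rfl | hy
        · exact ha
        · exact Finset.filter_subset _ _ (ht'sub hy)
      · have key : ∀ p ∈ t', δ ≤ dist a p := fun p hp => by
          have := (Finset.mem_filter.1 (ht'sub hp)).2
          rwa [dist_comm]
        intro p hp q hq hpq
        rcases Finset.mem_insert.1 hp with h1 | h1
        · rcases Finset.mem_insert.1 hq with h2 | h2
          · exact absurd (h1.trans h2.symm) hpq
          · rw [h1]; exact key q h2
        · rcases Finset.mem_insert.1 hq with h2 | h2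
          · rw [h2, dist_comm]; exact key p h1
          · exact ht'sep p h1 q h2 hpq
      · intro y hy
        by_cases hya : δ ≤ dist y a
        · obtain ⟨z, hz, hz'⟩ := ht'cov y (Finset.mem_filter.2 ⟨hy, hya⟩)
          exact ⟨z, Finset.mem_insert_of_mem hz, hz'⟩
        · exact ⟨a, Finset.mem_insert_self _ _, not_le.1 hya⟩

lemma aux_step {X : Type*} [MetricSpace X] [ProperSpace X] [MeasurableSpace X]
    [OpensMeasurableSpace X]
    (μ : Measure X) (J : Set X) (hJnull : μ Jᶜ = 0)
    (C : ℝ≥0) (hC1 : 1 ≤ C)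
    (hdoub : ∀ x ∈ J, ∀ r > (0:ℝ), μ (ball x (2 * r)) ≤ (C:ℝ≥0∞) * μ (ball x r))
    (γ : ℝ) (hγ : 0 < γ) (hγ2 : γ ≤ 1/2)
    (S : Set X)
    (hdiff : ∀ y ∈ J, ∀ s : ℝ, 0 < s → s ≤ 1 →
      ((J ∩ ball y s) \ cthickening (γ*s) S).Nonempty)
    (m : ℕ) (hm : 2 ≤ 2^m * (γ/16))
    (x : X) (r δ : ℝ) (hδ : 0 < δ) (hδ1 : δ ≤ 1) :
    (1 + ((C:ℝ≥0∞)^m)⁻¹) * μ (cthickening ((γ/16)*δ) S ∩ ball x (r + 4*((γ/16)*δ)))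
      ≤ μ (cthickening δ S ∩ ball x (r + 4*δ)) := by
  classical
  set ε : ℝ := γ/16 with hεdef
  have hε : 0 < ε := by positivity
  have hε32 : ε ≤ 1/32 := by rw [hεdef]; linarith
  set A : Set X := cthickening (ε*δ) S ∩ ball x (r + 4*(ε*δ)) with hA
  set A' : Set X := cthickening δ S ∩ ball x (r + 4*δ) with hA'
  set T : Set X := A ∩ J with hT
  -- μ A ≤ μ T
  have hAT : μ A ≤ μ T := by
    calc μ A ≤ μ (T ∪ Jᶜ) := measure_mono (fun p hp => by
          by_cases hpJ : p ∈ J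
          · exact Or.inl ⟨hp, hpJ⟩
          · exact Or.inr hpJ)
      _ ≤ μ T + μ Jᶜ := measure_union_le _ _
      _ = μ T := by rw [hJnull, add_zero]
  -- totally bounded, get finite δ-net t₀ with centers in T
  have hTB : TotallyBounded T := (isCompact_closedBall x (r + 4*(ε*δ))).totallyBounded.subset
    (fun p hp => ball_subset_closedBall hp.1.2)
  obtain ⟨t₀s, ht₀sub, ht₀fin, ht₀cov⟩ := hTB.exists_subset (dist_mem_uniformity hδ)
  set t₀ : Finset X := ht₀fin.toFinset with ht₀
  obtain ⟨t, htsub, htsep, htcov⟩ := aux_greedy δ hδ t₀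
  have htT : ∀ y ∈ t, y ∈ T := fun y hy =>
    ht₀sub (ht₀fin.mem_toFinset.1 (htsub hy))
  -- cover of T by balls of radius 2δ centered at t
  have hcov2 : T ⊆ ⋃ y ∈ t, ball y (2*δ) := by
    intro p hp
    obtain ⟨y₀, hy₀, hpy₀⟩ := Set.mem_iUnion₂.1 (ht₀cov hp)
    obtain ⟨z, hz, hy₀z⟩ := htcov y₀ (ht₀fin.mem_toFinset.2 hy₀)
    have : dist p y₀ < δ := hpy₀
    exact Set.mem_iUnion₂.2 ⟨z, hz, by
      have := dist_triangle p y₀ z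
      simp only [mem_ball]
      linarith⟩
  -- the diffuse points
  have hgex : ∀ y ∈ t, ∃ z : X, z ∈ J ∧ z ∈ ball y (δ/4) ∧
      z ∉ cthickening (4*(ε*δ)) S := by
    intro y hy
    have hyJ : y ∈ J := (htT y hy).2
    obtain ⟨z, ⟨⟨hzJ, hzb⟩, hzc⟩⟩ := hdiff y hyJ (δ/4) (by positivity) (by linarith)
    refine ⟨z, hzJ, hzb, ?_⟩
    have : γ * (δ/4) = 4*(ε*δ) := by rw [hεdef]; ring
    rwa [this] at hzc
  choose! g hgJ hgb hgc using hgex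
  set ρ : ℝ := 2*(ε*δ) with hρ
  have hρpos : 0 < ρ := by positivity
  -- each good ball is inside A'
  have hsubA' : ∀ y ∈ t, ball (g y) ρ ⊆ A' := by
    intro y hy w hw
    have hyA : y ∈ A := (htT y hy).1
    have hyc : y ∈ cthickening (ε*δ) S := hyA.1
    have hyb : y ∈ ball x (r + 4*(ε*δ)) := hyA.2
    constructor
    · rw [mem_cthickening_iff]
      have h1 : EMetric.infEdist w S ≤ EMetric.infEdist y S + edist w y :=
        EMetric.infEdist_le_infEdist_add_edist
      have h2 : EMetric.infEdist y S ≤ ENNReal.ofReal (ε*δ) :=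
        mem_cthickening_iff.1 hyc
      have h3 : edist w y ≤ ENNReal.ofReal (ρ + δ/4) := by
        rw [edist_dist]
        apply ENNReal.ofReal_le_ofReal
        have := dist_triangle w (g y) y
        have h4 : dist w (g y) < ρ := mem_ball.1 hw
        have h5 : dist (g y) y < δ/4 := mem_ball.1 (hgb y hy)
        linarith
      calc EMetric.infEdist w S ≤ ENNReal.ofReal (ε*δ) + ENNReal.ofReal (ρ + δ/4) :=
            h1.trans (add_le_add h2 h3)
        _ = ENNReal.ofReal (ε*δ + (ρ + δ/4)) := by
            rw [← ENNReal.ofReal_add (by positivity) (by positivity)]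
        _ ≤ ENNReal.ofReal δ := by
            apply ENNReal.ofReal_le_ofReal
            rw [hρ]; nlinarith
    · rw [mem_ball]
      have h4 : dist w (g y) < ρ := mem_ball.1 hw
      have h5 : dist (g y) y < δ/4 := mem_ball.1 (hgb y hy)
      have h6 : dist y x < r + 4*(ε*δ) := mem_ball.1 hyb
      have := dist_triangle w (g y) y
      have := dist_triangle w y x
      rw [hρ] at h4
      nlinarith
  -- good balls avoid the small cthickening
  have hdisjA : ∀ y ∈ t, Disjoint (ball (g y) ρ) A := by
    intro y hy
    rw [Set.disjoint_left]
    intro w hw hwA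
    have h2 : EMetric.infEdist (g y) S ≤ EMetric.infEdist w S + edist (g y) w :=
      EMetric.infEdist_le_infEdist_add_edist
    have h3 : EMetric.infEdist w S ≤ ENNReal.ofReal (ε*δ) := mem_cthickening_iff.1 hwA.1
    have h4 : edist (g y) w ≤ ENNReal.ofReal ρ := by
      rw [edist_dist]
      exact ENNReal.ofReal_le_ofReal (by have := mem_ball.1 hw; rw [dist_comm]; linarith)
    have h5 : EMetric.infEdist (g y) S ≤ ENNReal.ofReal (4*(ε*δ)) := by
      calc EMetric.infEdist (g y) S ≤ ENNReal.ofReal (ε*δ) + ENNReal.ofReal ρ :=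
            h2.trans (add_le_add h3 h4)
        _ = ENNReal.ofReal (ε*δ + ρ) := by
            rw [← ENNReal.ofReal_add (by positivity) (by positivity)]
        _ ≤ ENNReal.ofReal (4*(ε*δ)) := ENNReal.ofReal_le_ofReal (by rw [hρ]; nlinarith)
    exact hgc y hy (mem_cthickening_iff.2 h5)
  -- doubling estimate
  have hdouble : ∀ y ∈ t, μ (ball y (2*δ)) ≤ (C:ℝ≥0∞)^m * μ (ball (g y) ρ) := by
    intro y hy
    have h5 : dist (g y) y < δ/4 := mem_ball.1 (hgb y hy)
    have hsub : ball y (2*δ) ⊆ ball (g y) (2^m * ρ) := by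
      intro w hw
      rw [mem_ball]
      have h6 : dist w y < 2*δ := mem_ball.1 hw
      have := dist_triangle w y (g y)
      have h7 : (4:ℝ)*δ ≤ 2^m * ρ := by
        rw [hρ]
        have : (2:ℝ) * δ ≤ (2^m * ε) * δ := by nlinarith
        nlinarith
      rw [dist_comm] at h5
      nlinarith
    calc μ (ball y (2*δ)) ≤ μ (ball (g y) (2^m * ρ)) := measure_mono hsub
      _ ≤ (C:ℝ≥0∞)^m * μ (ball (g y) ρ) :=
          aux_doubling_pow μ J C hdoub m (g y) (hgJ y hy) ρ hρpos
  -- pairwise disjointness of good balls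
  have hpwd : (↑t : Set X).PairwiseDisjoint (fun y => ball (g y) ρ) := by
    intro y₁ hy₁ y₂ hy₂ hne
    have hd : δ ≤ dist y₁ y₂ := htsep y₁ hy₁ y₂ hy₂ hne
    apply ball_disjoint_ball
    have h1 : dist (g y₁) y₁ < δ/4 := mem_ball.1 (hgb y₁ hy₁)
    have h2 : dist (g y₂) y₂ < δ/4 := mem_ball.1 (hgb y₂ hy₂)
    have t1 := dist_triangle y₁ (g y₁) (g y₂)
    have t2 := dist_triangle (g y₁) (g y₂) y₂
    have t3 := dist_triangle y₁ (g y₂) y₂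
    rw [dist_comm (g y₁) y₁] at h1
    rw [hρ]
    nlinarith
  -- sum them up
  set Z : ℝ≥0∞ := ∑ y ∈ t, μ (ball (g y) ρ) with hZ
  have hAZ : μ A ≤ (C:ℝ≥0∞)^m * Z := by
    calc μ A ≤ μ T := hAT
      _ ≤ μ (⋃ y ∈ t, ball y (2*δ)) := measure_mono hcov2
      _ ≤ ∑ y ∈ t, μ (ball y (2*δ)) := measure_biUnion_finset_le _ _
      _ ≤ ∑ y ∈ t, (C:ℝ≥0∞)^m * μ (ball (g y) ρ) := Finset.sum_le_sum hdouble
      _ = (C:ℝ≥0∞)^m * Z := by rw [hZ, Finset.mul_sum]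
  have hUnion : μ A + Z ≤ μ A' := by
    have hZeq : μ (⋃ y ∈ t, ball (g y) ρ) = Z :=
      measure_biUnion_finset hpwd (fun y _ => measurableSet_ball)
    have hdisj : Disjoint A (⋃ y ∈ t, ball (g y) ρ) := by
      rw [Set.disjoint_left]
      intro w hwA hwU
      obtain ⟨y, hy, hwb⟩ := Set.mem_iUnion₂.1 hwU
      exact Set.disjoint_left.1 (hdisjA y hy) hwb hwA
    calc μ A + Z = μ (A ∪ ⋃ y ∈ t, ball (g y) ρ) := by
          rw [measure_union hdisj (MeasurableSet.biUnion t.countable_toSet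
            (fun y _ => measurableSet_ball)), hZeq]
      _ ≤ μ A' := by
          apply measure_mono
          apply Set.union_subset
          · intro p hp
            exact ⟨cthickening_mono (by nlinarith) S hp.1,
              ball_subset_ball (by nlinarith) hp.2⟩
          · exact Set.iUnion₂_subset hsubA'
  -- conclude
  have hCm0 : ((C:ℝ≥0∞)^m) ≠ 0 := by
    apply pow_ne_zero
    simpa using fun h => by simp [h] at hC1
  have hCmtop : ((C:ℝ≥0∞)^m) ≠ ⊤ := by
    exact ENNReal.pow_ne_top ENNReal.coe_ne_top
  calc (1 + ((C:ℝ≥0∞)^m)⁻¹) * μ A = μ A + ((C:ℝ≥0∞)^m)⁻¹ * μ A := by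
        rw [add_mul, one_mul]
    _ ≤ μ A + ((C:ℝ≥0∞)^m)⁻¹ * ((C:ℝ≥0∞)^m * Z) := by
        exact add_le_add_right (mul_le_mul_right hAZ _) _
    _ = μ A + Z := by rw [← mul_assoc, ENNReal.inv_mul_cancel hCm0 hCmtop, one_mul]
    _ ≤ μ A' := hUnion

lemma aux_iter {X : Type*} [MetricSpace X] [ProperSpace X] [MeasurableSpace X]
    [OpensMeasurableSpace X]
    (μ : Measure X) (J : Set X) (hJnull : μ Jᶜ = 0)
    (C : ℝ≥0) (hC1 : 1 ≤ C)
    (hdoub : ∀ x ∈ J, ∀ r > (0:ℝ), μ (ball x (2 * r)) ≤ (C:ℝ≥0∞) * μ (ball x r))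
    (γ : ℝ) (hγ : 0 < γ) (hγ2 : γ ≤ 1/2)
    (S : Set X)
    (hdiff : ∀ y ∈ J, ∀ s : ℝ, 0 < s → s ≤ 1 →
      ((J ∩ ball y s) \ cthickening (γ*s) S).Nonempty)
    (m : ℕ) (hm : 2 ≤ 2^m * (γ/16))
    (x : X) (r : ℝ) (hr : 0 < r) (hr1 : r ≤ 1) (k : ℕ) :
    μ (cthickening ((γ/16)^k * r) S ∩ ball x (r + 4*((γ/16)^k * r)))
      ≤ ((1 + ((C:ℝ≥0∞)^m)⁻¹)⁻¹)^k * μ (cthickening r S ∩ ball x (r + 4*r)) := by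
  have hε : 0 < γ/16 := by positivity
  have hε1 : γ/16 ≤ 1 := by linarith
  have hCm0 : ((C:ℝ≥0∞)^m) ≠ 0 := by
    apply pow_ne_zero
    simpa using fun h => by simp [h] at hC1
  have hne0 : (1 + ((C:ℝ≥0∞)^m)⁻¹) ≠ 0 := by
    simp
  have hnetop : (1 + ((C:ℝ≥0∞)^m)⁻¹) ≠ ⊤ := by
    refine ENNReal.add_ne_top.2 ⟨ENNReal.one_ne_top, ?_⟩
    exact ENNReal.inv_ne_top.2 hCm0
  induction k with
  | zero => simp
  | succ n ih =>
    have hδpos : 0 < (γ/16)^n * r := by positivity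
    have hδ1 : (γ/16)^n * r ≤ 1 := by
      have h1 : (γ/16)^n ≤ 1 := pow_le_one₀ hε.le hε1
      nlinarith
    have hstep := aux_step μ J hJnull C hC1 hdoub γ hγ hγ2 S hdiff m hm x r
      ((γ/16)^n * r) hδpos hδ1
    have he : (γ/16)^(n+1) * r = (γ/16) * ((γ/16)^n * r) := by ring
    rw [he]
    calc μ (cthickening ((γ/16) * ((γ/16)^n * r)) S ∩
          ball x (r + 4*((γ/16) * ((γ/16)^n * r))))
        = (1 + ((C:ℝ≥0∞)^m)⁻¹)⁻¹ * ((1 + ((C:ℝ≥0∞)^m)⁻¹) *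
            μ (cthickening ((γ/16) * ((γ/16)^n * r)) S ∩
              ball x (r + 4*((γ/16) * ((γ/16)^n * r))))) := by
          rw [show ∀ Q:ℝ≥0∞, (1 + ((C:ℝ≥0∞)^m)⁻¹)⁻¹ * ((1 + ((C:ℝ≥0∞)^m)⁻¹) * Q) = Q
            from fun Q => by rw [← mul_assoc, ENNReal.inv_mul_cancel hne0 hnetop, one_mul]]
      _ ≤ (1 + ((C:ℝ≥0∞)^m)⁻¹)⁻¹ *
            μ (cthickening ((γ/16)^n * r) S ∩ ball x (r + 4*((γ/16)^n * r))) :=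
          mul_le_mul_right hstep _
      _ ≤ (1 + ((C:ℝ≥0∞)^m)⁻¹)⁻¹ * (((1 + ((C:ℝ≥0∞)^m)⁻¹)⁻¹)^n *
            μ (cthickening r S ∩ ball x (r + 4*r))) := mul_le_mul_right ih _
      _ = ((1 + ((C:ℝ≥0∞)^m)⁻¹)⁻¹)^(n+1) *
            μ (cthickening r S ∩ ball x (r + 4*r)) := by ring

set_option maxHeartbeats 1000000 in
/-- A doubling measure on `ℝ^d` whose topological support is hyperplane diffuse is
absolutely decaying. Affine hyperplanes are represented as level sets `{y | φ y = c}`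
of nonzero continuous linear functionals, and `N(L, ε)` is the closed `ε`-neighborhood
(`Metric.cthickening`). -/
theorem stmt1 {d : ℕ} (μ : Measure (EuclideanSpace ℝ (Fin d)))
    (J : Set (EuclideanSpace ℝ (Fin d)))
    (hJ : J = {x | ∀ r > 0, 0 < μ (ball x r)})
    -- μ is doubling:
    (hdoub : ∃ C : ℝ≥0, 0 < C ∧ ∀ x ∈ J, ∀ r > (0 : ℝ),
      μ (ball x (2 * r)) ≤ (C : ℝ≥0∞) * μ (ball x r))
    -- J is hyperplane diffuse:
    (hdiffuse : ∃ γ > (0 : ℝ), ∀ x ∈ J, ∀ r : ℝ, 0 < r → r ≤ 1 →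
      ∀ (φ : EuclideanSpace ℝ (Fin d) →L[ℝ] ℝ) (c : ℝ), φ ≠ 0 →
        ((J ∩ ball x r) \ cthickening (γ * r) {y | φ y = c}).Nonempty) :
    -- μ is absolutely decaying:
    ∃ C > (0 : ℝ), ∃ α > (0 : ℝ), ∃ r₀ > (0 : ℝ), ∀ x ∈ J, ∀ r : ℝ, 0 < r → r ≤ r₀ →
      ∀ β > (0 : ℝ), ∀ (φ : EuclideanSpace ℝ (Fin d) →L[ℝ] ℝ) (c : ℝ), φ ≠ 0 →
        μ (cthickening (β * r) {y | φ y = c} ∩ ball x r)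
          ≤ ENNReal.ofReal (C * Real.rpow β α) * μ (ball x r) := by
  classical
  obtain ⟨C₀, hC₀pos, hdoub₀⟩ := hdoub
  obtain ⟨γ₀, hγ₀pos, hdiff₀⟩ := hdiffuse
  set C : ℝ≥0 := max C₀ 1 with hC
  have hC1 : 1 ≤ C := le_max_right _ _
  have hdoubC : ∀ x ∈ J, ∀ r > (0:ℝ),
      μ (ball x (2 * r)) ≤ (C : ℝ≥0∞) * μ (ball x r) := by
    intro x hx r hr
    refine (hdoub₀ x hx r hr).trans (mul_le_mul_left ?_ _)
    exact ENNReal.coe_le_coe.2 (le_max_left _ _)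
  set γ : ℝ := min γ₀ (1/2) with hγdef
  have hγ : 0 < γ := lt_min hγ₀pos (by norm_num)
  have hγ2 : γ ≤ 1/2 := min_le_right _ _
  set ε : ℝ := γ/16 with hεdef
  have hε : 0 < ε := by positivity
  have hε1 : ε < 1 := by rw [hεdef]; linarith
  -- choose m with 2 ≤ 2^m * ε
  obtain ⟨m, hm'⟩ := pow_unbounded_of_one_lt (2/ε) (by norm_num : (1:ℝ) < 2)
  have hm : 2 ≤ 2^m * ε := by
    rw [div_lt_iff₀ hε] at hm'
    linarith
  have hJnull : μ Jᶜ = 0 := by rw [hJ]; exact aux_compl_supp_null μ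
  -- the contraction factor, real version
  set cR : ℝ := (((C:ℝ))^m)⁻¹ with hcR
  have hCRpos : (0:ℝ) < (C:ℝ) := by positivity
  have hCR1 : (1:ℝ) ≤ (C:ℝ) := by exact_mod_cast hC1
  have hcRpos : 0 < cR := by rw [hcR]; positivity
  have hcR1 : cR ≤ 1 := by
    rw [hcR]
    rw [inv_le_one_iff₀]
    right
    exact one_le_pow₀ hCR1
  set lamR : ℝ := (1 + cR)⁻¹ with hlamR
  have hlamRpos : 0 < lamR := by rw [hlamR]; positivity
  have hlamR1 : lamR < 1 := by
    rw [hlamR]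
    rw [inv_lt_one_iff₀]
    right
    linarith
  have hlam_eq : ((1 + ((C:ℝ≥0∞)^m)⁻¹)⁻¹ : ℝ≥0∞) = ENNReal.ofReal lamR := by
    have h1 : ((C:ℝ≥0∞)^m) = ENNReal.ofReal ((C:ℝ)^m) := by
      rw [ENNReal.ofReal_pow hCRpos.le]
      congr 1
      simp [ENNReal.ofReal_coe_nnreal]
    rw [hlamR, ENNReal.ofReal_inv_of_pos (by positivity),
      ENNReal.ofReal_add (by norm_num) hcRpos.le, hcR,
      ENNReal.ofReal_inv_of_pos (by positivity), ← h1, ENNReal.ofReal_one]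
  -- exponent
  have hlogε : Real.log ε < 0 := Real.log_neg hε hε1
  have hlogεne : Real.log ε ≠ 0 := ne_of_lt hlogε
  have hloglam : Real.log lamR < 0 := Real.log_neg hlamRpos hlamR1
  set α : ℝ := Real.log lamR / Real.log ε with hα
  have hαpos : 0 < α := div_pos_of_neg_of_neg hloglam hlogε
  have hεα1 : ε ^ α ≤ 1 := Real.rpow_le_one hε.le hε1.le hαpos.le
  have hεαpos : 0 < ε ^ α := Real.rpow_pos_of_pos hε α
  set Cf : ℝ := (C:ℝ)^3 * lamR⁻¹ * (ε ^ α)⁻¹ with hCf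
  have hCfpos : 0 < Cf := by rw [hCf]; positivity
  refine ⟨Cf, hCfpos, α, hαpos, 1, one_pos, ?_⟩
  intro x hx r hr hr1 β hβ φ c hφ
  set S : Set (EuclideanSpace ℝ (Fin d)) := {y | φ y = c} with hS
  have hdiffS : ∀ y ∈ J, ∀ s : ℝ, 0 < s → s ≤ 1 →
      ((J ∩ ball y s) \ cthickening (γ*s) S).Nonempty := by
    intro y hy s hs hs1
    obtain ⟨z, hz1, hz2⟩ := hdiff₀ y hy s hs hs1 φ c hφ
    refine ⟨z, hz1, fun hzc => hz2 ?_⟩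
    exact cthickening_mono (by nlinarith [min_le_left γ₀ (1/2)]) S hzc
  by_cases hβε : β ≤ ε
  · -- main case
    set q : ℝ := Real.log β / Real.log ε with hq
    have hlogβ : Real.log β ≤ Real.log ε := Real.log_le_log hβ hβε
    have hq1 : 1 ≤ q := by
      rw [hq, le_div_iff_of_neg hlogε]
      linarith
    set k : ℕ := ⌊q⌋₊ with hk
    have hkq : (k:ℝ) ≤ q := Nat.floor_le (by linarith)
    have hqk1 : q < k + 1 := Nat.lt_floor_add_one q
    have hβεk : β ≤ ε ^ k := by
      have h1 : Real.log β ≤ k * Real.log ε := by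
        have h2 : q * Real.log ε = Real.log β := div_mul_cancel₀ _ hlogεne
        nlinarith
      calc β = Real.exp (Real.log β) := (Real.exp_log hβ).symm
        _ ≤ Real.exp (k * Real.log ε) := Real.exp_le_exp.2 h1
        _ = ε ^ k := by
            rw [← Real.log_pow, Real.exp_log (by positivity)]
    have hsub : cthickening (β * r) S ∩ ball x r ⊆
        cthickening (ε^k * r) S ∩ ball x (r + 4*(ε^k * r)) := by
      intro p hp
      have h0 : (0:ℝ) ≤ 4*(ε^k*r) := by positivity
      exact ⟨cthickening_mono (mul_le_mul_of_nonneg_right hβεk hr.le) S hp.1,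
        ball_subset_ball (by linarith) hp.2⟩
    have hiter := aux_iter μ J hJnull C hC1 hdoubC γ hγ hγ2 S hdiffS m hm x r hr hr1 k
    have hH0 : μ (cthickening r S ∩ ball x (r + 4*r)) ≤ (C:ℝ≥0∞)^3 * μ (ball x r) := by
      calc μ (cthickening r S ∩ ball x (r + 4*r)) ≤ μ (ball x (2^3 * r)) :=
            measure_mono (fun p hp => ball_subset_ball (by linarith) hp.2)
        _ ≤ (C:ℝ≥0∞)^3 * μ (ball x r) := aux_doubling_pow μ J C hdoubC 3 x hx r hr
    -- numeric comparison
    have hkey : lamR ^ (k+1) ≤ β ^ α := by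
      have h1 : ((k:ℝ)+1) * Real.log lamR ≤ Real.log β * α := by
        have h2 : Real.log β * α = q * Real.log lamR := by
          rw [hα, hq]; field_simp; try ring
        rw [h2]
        exact mul_le_mul_of_nonpos_right (by linarith) hloglam.le
      calc lamR ^ (k+1) = Real.exp (Real.log (lamR ^ (k+1))) :=
            (Real.exp_log (by positivity)).symm
        _ = Real.exp (((k:ℝ)+1) * Real.log lamR) := by
            rw [Real.log_pow]; push_cast; ring_nf
        _ ≤ Real.exp (Real.log β * α) := Real.exp_le_exp.2 h1
        _ = β ^ α := (Real.rpow_def_of_pos hβ α).symm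
    have hnum : lamR ^ k * (C:ℝ)^3 ≤ Cf * β ^ α := by
      have hβαpos : 0 < β ^ α := Real.rpow_pos_of_pos hβ α
      have h3 : lamR ^ k ≤ β ^ α / lamR := by
        rw [le_div_iff₀ hlamRpos, ← pow_succ]
        exact hkey
      have h4 : (ε ^ α)⁻¹ ≥ 1 := by
        nlinarith [mul_inv_cancel₀ hεαpos.ne', inv_pos.2 hεαpos]
      have h5 : Cf * β ^ α = (C:ℝ)^3 * (β ^ α / lamR) * (ε ^ α)⁻¹ := by
        rw [hCf]; field_simp
      rw [h5]
      have h6 : lamR ^ k * (C:ℝ)^3 ≤ (C:ℝ)^3 * (β ^ α / lamR) := by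
        rw [mul_comm]
        apply mul_le_mul_of_nonneg_left h3 (by positivity)
      nlinarith [mul_pos (mul_pos (pow_pos hCRpos 3) (div_pos hβαpos hlamRpos)) hεαpos]
    calc μ (cthickening (β * r) S ∩ ball x r)
        ≤ μ (cthickening (ε^k * r) S ∩ ball x (r + 4*(ε^k * r))) := measure_mono hsub
      _ ≤ ((1 + ((C:ℝ≥0∞)^m)⁻¹)⁻¹)^k * μ (cthickening r S ∩ ball x (r + 4*r)) := hiter
      _ ≤ ((1 + ((C:ℝ≥0∞)^m)⁻¹)⁻¹)^k * ((C:ℝ≥0∞)^3 * μ (ball x r)) :=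
          mul_le_mul_right hH0 _
      _ = (ENNReal.ofReal (lamR ^ k * (C:ℝ)^3)) * μ (ball x r) := by
          rw [hlam_eq, ENNReal.ofReal_mul (by positivity), ENNReal.ofReal_pow hlamRpos.le,
            mul_assoc]
          congr 2
          rw [ENNReal.ofReal_pow hCRpos.le, ENNReal.ofReal_coe_nnreal]
      _ ≤ ENNReal.ofReal (Cf * Real.rpow β α) * μ (ball x r) :=
          mul_le_mul_left (ENNReal.ofReal_le_ofReal hnum) _
  · -- easy case β > ε
    push_neg at hβε
    have h1 : (1:ℝ) ≤ Cf * β ^ α := by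
      have h2 : ε ^ α ≤ β ^ α := Real.rpow_le_rpow hε.le hβε.le hαpos.le
      have h3 : Cf * ε ^ α = (C:ℝ)^3 * lamR⁻¹ := by
        rw [hCf, mul_assoc ((C:ℝ)^3 * lamR⁻¹), inv_mul_cancel₀ hεαpos.ne', mul_one]
      have h4 : (1:ℝ) ≤ (C:ℝ)^3 * lamR⁻¹ := by
        have h5 : (1:ℝ) ≤ (C:ℝ)^3 := one_le_pow₀ hCR1
        have h6 : (1:ℝ) ≤ lamR⁻¹ := by
          nlinarith [mul_inv_cancel₀ hlamRpos.ne', inv_pos.2 hlamRpos, hlamR1.le]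
        nlinarith
      nlinarith [mul_le_mul_of_nonneg_left h2 hCfpos.le]
    calc μ (cthickening (β * r) S ∩ ball x r) ≤ μ (ball x r) :=
          measure_mono Set.inter_subset_right
      _ = 1 * μ (ball x r) := (one_mul _).symm
      _ ≤ ENNReal.ofReal (Cf * Real.rpow β α) * μ (ball x r) := by
          apply mul_le_mul_left
          rw [ENNReal.one_le_ofReal]
          exact h1
end

section
/- Let μ be a doubling measure on ℝ^d whose support J is hyperplane diffuse with constant γ > 0. Then there exists ε > 0, independent of the choices below, such that for every p ∈ J, every affine hyperplane L, and all 0 < r < R < 1, setting S₁ = B(p,R) ∩ N(L, γr/2) and S₂ = B(p, R+r) ∩ N(L, (γ+2)r), one has μ(S₁) ≤ (1−ε)·μ(S₂). -/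
open Metric MeasureTheory NNReal ENNReal

/-- The complement of the set of points all of whose balls have positive measure is null
(in a second countable space). -/
lemma aux_null_compl {d : ℕ} (μ : Measure (EuclideanSpace ℝ (Fin d))) :
    μ {x | ∀ r > 0, 0 < μ (ball x r)}ᶜ = 0 := by
  set J := {x : EuclideanSpace ℝ (Fin d) | ∀ r > 0, 0 < μ (ball x r)}
  have h : ∀ x : EuclideanSpace ℝ (Fin d), x ∉ J → ∃ s, 0 < s ∧ μ (ball x s) = 0 := by
    intro x hx
    simp only [J, Set.mem_setOf_eq, not_forall] at hx
    obtain ⟨s, hs, h0⟩ := hx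
    exact ⟨s, hs, by simpa using h0⟩
  choose! s hs hs0 using h
  set F : ↥(Jᶜ) → Set (EuclideanSpace ℝ (Fin d)) := fun x => ball (x : _) (s x)
  obtain ⟨T, Tcount, hT⟩ := TopologicalSpace.isOpen_iUnion_countable F (fun i => isOpen_ball)
  have hsub : Jᶜ ⊆ ⋃ i ∈ T, F i := by
    rw [hT]
    intro x hx
    exact Set.mem_iUnion.2 ⟨⟨x, hx⟩, mem_ball_self (hs x hx)⟩
  refine le_antisymm ?_ (by simp)
  calc μ Jᶜ ≤ μ (⋃ i ∈ T, F i) := measure_mono hsub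
    _ ≤ ∑' i : T, μ (F i) := measure_biUnion_le μ Tcount F
    _ = 0 := by
        rw [ENNReal.tsum_eq_zero]
        rintro ⟨⟨x, hx⟩, -⟩
        exact hs0 x hx

/-- For a doubling measure `μ` on `ℝ^d` whose support `J` is hyperplane diffuse with constant
`γ`, there is an `ε > 0` (independent of all the choices) such that for every `p ∈ J`, every
affine hyperplane `L = {y | φ y = c}` and all `0 < r < R < 1`, setting
`S₁ = B(p,R) ∩ N(L, γr/2)` and `S₂ = B(p,R+r) ∩ N(L, (γ+2)r)` one has
`μ(S₁) ≤ (1-ε)·μ(S₂)`. -/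
theorem stmt2 {d : ℕ} (μ : Measure (EuclideanSpace ℝ (Fin d)))
    (J : Set (EuclideanSpace ℝ (Fin d)))
    (hJ : J = {x | ∀ r > 0, 0 < μ (ball x r)})
    (C : ℝ≥0) (hC : 0 < C)
    (hdoub : ∀ x ∈ J, ∀ r > (0 : ℝ), μ (ball x (2 * r)) ≤ (C : ℝ≥0∞) * μ (ball x r))
    (γ : ℝ) (hγ : 0 < γ)
    (hdiffuse : ∀ x ∈ J, ∀ r : ℝ, 0 < r → r ≤ 1 →
      ∀ (φ : EuclideanSpace ℝ (Fin d) →L[ℝ] ℝ) (c : ℝ), φ ≠ 0 →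
        ((J ∩ ball x r) \ cthickening (γ * r) {y | φ y = c}).Nonempty) :
    ∃ ε > (0 : ℝ), ∀ p ∈ J, ∀ (φ : EuclideanSpace ℝ (Fin d) →L[ℝ] ℝ) (c : ℝ), φ ≠ 0 →
      ∀ r R : ℝ, 0 < r → r < R → R < 1 →
        μ (ball p R ∩ cthickening (γ * r / 2) {y | φ y = c})
          ≤ ENNReal.ofReal (1 - ε) *
            μ (ball p (R + r) ∩ cthickening ((γ + 2) * r) {y | φ y = c}) := by
  classical
  -- enlarged doubling constant
  set D : ℝ≥0 := max C 1 with hD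
  have hD1 : (1 : ℝ≥0) ≤ D := le_max_right _ _
  have hdoubD : ∀ x ∈ J, ∀ s > (0 : ℝ), μ (ball x (2 * s)) ≤ (D : ℝ≥0∞) * μ (ball x s) := by
    intro x hx s hs
    refine (hdoub x hx s hs).trans ?_
    gcongr
    exact_mod_cast le_max_left C 1
  have hiter : ∀ x ∈ J, ∀ s > (0 : ℝ), ∀ n : ℕ,
      μ (ball x (2 ^ n * s)) ≤ (D : ℝ≥0∞) ^ n * μ (ball x s) := by
    intro x hx s hs n
    induction n with
    | zero => simp
    | succ n ih =>
        have h2 : (2 : ℝ) ^ (n + 1) * s = 2 * (2 ^ n * s) := by ring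
        have hpos : (0 : ℝ) < 2 ^ n * s := by positivity
        calc μ (ball x (2 ^ (n + 1) * s)) = μ (ball x (2 * (2 ^ n * s))) := by rw [h2]
          _ ≤ (D : ℝ≥0∞) * μ (ball x (2 ^ n * s)) := hdoubD x hx _ hpos
          _ ≤ (D : ℝ≥0∞) * ((D : ℝ≥0∞) ^ n * μ (ball x s)) := by gcongr
          _ = (D : ℝ≥0∞) ^ (n + 1) * μ (ball x s) := by ring
  set κ : ℝ := min (γ / 6) (1 / 3) with hκdef
  have hκ : 0 < κ := lt_min (by linarith) (by norm_num)
  have hκγ : κ ≤ γ / 6 := min_le_left _ _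
  have hκ3 : κ ≤ 1 / 3 := min_le_right _ _
  obtain ⟨m, hm⟩ : ∃ m : ℕ, (9 : ℝ) / κ < 2 ^ m := pow_unbounded_of_one_lt _ one_lt_two
  have h9κ : (9 : ℝ) < 2 ^ m * κ := by
    rw [div_lt_iff₀ hκ] at hm
    linarith
  set k : ℝ≥0 := D ^ m with hk
  have hk0 : (0 : ℝ) < (k : ℝ) + 1 := by positivity
  refine ⟨1 / ((k : ℝ) + 1), by positivity, ?_⟩
  intro p hp φ c hφ r R hr hrR hR1
  set L : Set (EuclideanSpace ℝ (Fin d)) := {y | φ y = c} with hL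
  set S₁ : Set (EuclideanSpace ℝ (Fin d)) := ball p R ∩ cthickening (γ * r / 2) L with hS₁
  set S₂ : Set (EuclideanSpace ℝ (Fin d)) :=
    ball p (R + r) ∩ cthickening ((γ + 2) * r) L with hS₂
  have hrpos : (0 : ℝ) < r := hr
  have hr1 : r < 1 := hrR.trans hR1
  have hS₁S₂ : S₁ ⊆ S₂ := by
    apply Set.inter_subset_inter
    · exact ball_subset_ball (by linarith)
    · exact cthickening_mono (by nlinarith) L
  have hS₁meas : MeasurableSet S₁ :=
    measurableSet_ball.inter (isClosed_cthickening.measurableSet)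
  -- the key geometric claim
  have key : ∀ x ∈ S₁ ∩ J, ∃ q, q ∈ J ∧ dist q x < 2 * r / 3 ∧
      ball q (κ * r) ⊆ S₂ \ S₁ ∧ ball q (κ * r) ⊆ ball x r := by
    rintro x ⟨⟨hxball, hxthick⟩, hxJ⟩
    obtain ⟨q, ⟨hqJ, hqball⟩, hqfar⟩ :=
      hdiffuse x hxJ (2 * r / 3) (by linarith) (by linarith) φ c hφ
    rw [mem_ball] at hqball
    have hqfar' : ENNReal.ofReal (γ * (2 * r / 3)) < EMetric.infEdist q L := by
      by_contra h
      exact hqfar (mem_cthickening_iff.2 (not_lt.1 h))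
    have hxthick' : EMetric.infEdist x L ≤ ENNReal.ofReal (γ * r / 2) :=
      mem_cthickening_iff.1 hxthick
    have hsub2 : ∀ z ∈ ball q (κ * r), z ∈ ball x r := by
      intro z hz
      rw [mem_ball] at hz ⊢
      have := dist_triangle z q x
      have : dist z x ≤ dist z q + dist q x := dist_triangle z q x
      nlinarith [dist_nonneg (x := z) (y := q)]
    refine ⟨q, hqJ, hqball, ?_, hsub2⟩
    intro z hz
    have hzq : dist z q < κ * r := mem_ball.1 hz
    have hzx : dist z x < r := mem_ball.1 (hsub2 z hz)
    constructor
    · constructor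
      · -- z ∈ ball p (R + r)
        rw [mem_ball]
        have h1 := dist_triangle z x p
        rw [mem_ball] at hxball
        linarith
      · -- z ∈ cthickening ((γ+2)*r) L
        rw [mem_cthickening_iff]
        calc EMetric.infEdist z L ≤ edist z x + EMetric.infEdist x L :=
              EMetric.infEdist_le_edist_add_infEdist
          _ ≤ ENNReal.ofReal (dist z x) + ENNReal.ofReal (γ * r / 2) := by
              rw [edist_dist]; gcongr
          _ = ENNReal.ofReal (dist z x + γ * r / 2) := by
              rw [ENNReal.ofReal_add dist_nonneg (by positivity)]
          _ ≤ ENNReal.ofReal ((γ + 2) * r) := by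
              apply ENNReal.ofReal_le_ofReal
              nlinarith
    · -- z ∉ S₁
      rintro ⟨-, hzthick⟩
      have hzthick' : EMetric.infEdist z L ≤ ENNReal.ofReal (γ * r / 2) :=
        mem_cthickening_iff.1 hzthick
      have : EMetric.infEdist q L ≤ ENNReal.ofReal (γ * (2 * r / 3)) := by
        calc EMetric.infEdist q L ≤ edist q z + EMetric.infEdist z L :=
              EMetric.infEdist_le_edist_add_infEdist
          _ ≤ ENNReal.ofReal (dist q z) + ENNReal.ofReal (γ * r / 2) := by
              rw [edist_dist]; gcongr
          _ = ENNReal.ofReal (dist q z + γ * r / 2) := by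
              rw [ENNReal.ofReal_add dist_nonneg (by positivity)]
          _ ≤ ENNReal.ofReal (γ * (2 * r / 3)) := by
              apply ENNReal.ofReal_le_ofReal
              rw [dist_comm] at hzq
              nlinarith
      exact absurd this (not_le.2 hqfar')
  choose! Q hQJ hQdist hQsub hQball using key
  -- Vitali covering
  obtain ⟨u, hu_sub, hu_disj, hu_cov⟩ :=
    Vitali.exists_disjoint_subfamily_covering_enlargement_closedBall (S₁ ∩ J)
      (id : EuclideanSpace ℝ (Fin d) → EuclideanSpace ℝ (Fin d)) (fun _ => 2 * r) (2 * r)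
      (fun _ _ => le_rfl) 4 (by norm_num)
  have hu_count : u.Countable := by
    have hdisj' : u.PairwiseDisjoint (fun b => ball b (2 * r)) := by
      intro a ha b hb hab
      exact (hu_disj ha hb hab).mono ball_subset_closedBall ball_subset_closedBall
    exact hdisj'.countable_of_isOpen (fun b _ => isOpen_ball)
      (fun b _ => nonempty_ball.2 (by linarith))
  have hcov : S₁ ∩ J ⊆ ⋃ b ∈ u, closedBall b (4 * (2 * r)) := by
    intro a ha
    obtain ⟨b, hbu, hab⟩ := hu_cov a ha
    exact Set.mem_biUnion hbu (hab (mem_closedBall_self (by linarith)))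
  -- disjointness of the small balls
  have hQdisj : u.PairwiseDisjoint (fun b => ball (Q b) (κ * r)) := by
    intro a ha b hb hab
    refine (hu_disj ha hb hab).mono ?_ ?_
    · exact (hQball a (hu_sub ha)).trans
        ((ball_subset_ball (by linarith)).trans ball_subset_closedBall)
    · exact (hQball b (hu_sub hb)).trans
        ((ball_subset_ball (by linarith)).trans ball_subset_closedBall)
  -- measure comparison for each ball
  have hball_est : ∀ b ∈ u,
      μ (closedBall b (4 * (2 * r))) ≤ (D : ℝ≥0∞) ^ m * μ (ball (Q b) (κ * r)) := by
    intro b hb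
    have hbS : b ∈ S₁ ∩ J := hu_sub hb
    have h1 : closedBall b (4 * (2 * r)) ⊆ ball (Q b) (2 ^ m * (κ * r)) := by
      intro z hz
      rw [mem_closedBall] at hz
      rw [mem_ball]
      have h2 := dist_triangle z b (Q b)
      have h3 : dist b (Q b) < 2 * r / 3 := by
        rw [dist_comm]; exact hQdist b hbS
      have h4 : dist z (Q b) < 9 * r := by linarith
      calc dist z (Q b) < 9 * r := h4
        _ ≤ 2 ^ m * (κ * r) := by nlinarith
    calc μ (closedBall b (4 * (2 * r))) ≤ μ (ball (Q b) (2 ^ m * (κ * r))) := measure_mono h1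
      _ ≤ (D : ℝ≥0∞) ^ m * μ (ball (Q b) (κ * r)) :=
          hiter (Q b) (hQJ b hbS) (κ * r) (by positivity) m
  -- main estimate
  have hmain : μ S₁ ≤ (D : ℝ≥0∞) ^ m * μ (S₂ \ S₁) := by
    have hJc : μ Jᶜ = 0 := by rw [hJ]; exact aux_null_compl μ
    have h0 : μ S₁ ≤ μ (S₁ ∩ J) := by
      have hle := measure_union_le (μ := μ) (S₁ ∩ J) (S₁ \ J)
      rw [Set.inter_union_diff] at hle
      have h1 : μ (S₁ \ J) = 0 :=
        measure_mono_null (fun z hz => hz.2) hJc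
      simpa [h1] using hle
    calc μ S₁ ≤ μ (S₁ ∩ J) := h0
      _ ≤ μ (⋃ b ∈ u, closedBall b (4 * (2 * r))) := measure_mono hcov
      _ ≤ ∑' b : u, μ (closedBall b (4 * (2 * r))) := measure_biUnion_le μ hu_count _
      _ ≤ ∑' b : u, (D : ℝ≥0∞) ^ m * μ (ball (Q b) (κ * r)) :=
          ENNReal.tsum_le_tsum (fun b => hball_est b b.2)
      _ = (D : ℝ≥0∞) ^ m * ∑' b : u, μ (ball (Q b) (κ * r)) := ENNReal.tsum_mul_left
      _ = (D : ℝ≥0∞) ^ m * μ (⋃ b ∈ u, ball (Q b) (κ * r)) := by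
          rw [measure_biUnion hu_count hQdisj (fun b _ => measurableSet_ball)]
      _ ≤ (D : ℝ≥0∞) ^ m * μ (S₂ \ S₁) := by
          gcongr
          exact Set.iUnion₂_subset (fun b hb => hQsub b (hu_sub hb))
  -- conclude
  have hsum : μ S₁ + μ (S₂ \ S₁) = μ S₂ := by
    have := measure_inter_add_diff (μ := μ) S₂ hS₁meas
    rwa [Set.inter_eq_self_of_subset_right hS₁S₂] at this
  have hkD : ((k : ℝ≥0∞)) = (D : ℝ≥0∞) ^ m := by
    rw [hk, ENNReal.coe_pow]
  have hlhs : μ S₁ * ((k : ℝ≥0∞) + 1) ≤ (k : ℝ≥0∞) * μ S₂ := by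
    calc μ S₁ * ((k : ℝ≥0∞) + 1) = (k : ℝ≥0∞) * μ S₁ + μ S₁ := by ring
      _ ≤ (k : ℝ≥0∞) * μ S₁ + (k : ℝ≥0∞) * μ (S₂ \ S₁) := by
          gcongr
          rw [hkD]; exact hmain
      _ = (k : ℝ≥0∞) * (μ S₁ + μ (S₂ \ S₁)) := by ring
      _ = (k : ℝ≥0∞) * μ S₂ := by rw [hsum]
  have hof : ENNReal.ofReal (1 - 1 / ((k : ℝ) + 1)) = (k : ℝ≥0∞) / ((k : ℝ≥0∞) + 1) := by
    have h1 : (1 : ℝ) - 1 / ((k : ℝ) + 1) = (k : ℝ) / ((k : ℝ) + 1) := by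
      field_simp
      ring
    rw [h1, ENNReal.ofReal_div_of_pos hk0, ENNReal.ofReal_add (k.coe_nonneg) zero_le_one]
    simp [ENNReal.ofReal_coe_nnreal]
  rw [hof]
  have hrw : (k : ℝ≥0∞) / ((k : ℝ≥0∞) + 1) * μ S₂ = (k : ℝ≥0∞) * μ S₂ / ((k : ℝ≥0∞) + 1) := by
    rw [div_eq_mul_inv, div_eq_mul_inv, mul_right_comm]
  rw [hrw, ENNReal.le_div_iff_mul_le (Or.inl (by simp)) (Or.inl (by simp))]
  exact hlhs
end

section
/- Let f : 𝔹 → 𝔹 be a proper holomorphic map of degree D of the open unit disc to itself (a Blaschke product with zeros b₁,…,b_D), and let K₂ ⊆ 𝔹 be a compact set of hyperbolic diameter at most C₁. Then every connected component K₁ of f⁻¹(K₂) has hyperbolic diameter at most C₂ = 2D·C₂' where C₂' depends only on D and C₁. More precisely, if 0 ∈ K₂ then K₁ is contained in the union of the hyperbolic balls of radius C₂' centered at the zeros b₁,…,b_D, where C₂' is the hyperbolic distance from 0 to C₁'^{1/D} and C₁' < 1 is defined by dist_𝔹(0, C₁') = C₁. -/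
open Metric

/-- The pseudo-hyperbolic distance `|(z-w)/(1 - w̄ z)|` on the unit disc. -/
noncomputable def pseudoDist (z w : ℂ) : ℝ :=
  ‖(z - w) / (1 - (starRingEnd ℂ) w * z)‖

/-- Hyperbolic (Poincaré) distance on the unit disc:
`hypDist z w = 2 artanh ρ = log ((1+ρ)/(1-ρ))` where `ρ` is the pseudo-hyperbolic
distance. -/
noncomputable def hypDist (z w : ℂ) : ℝ :=
  Real.log ((1 + pseudoDist z w) / (1 - pseudoDist z w))

lemma normSq_identity (z w : ℂ) :
    Complex.normSq (1 - (starRingEnd ℂ) w * z) - Complex.normSq (z - w)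
      = (1 - Complex.normSq z) * (1 - Complex.normSq w) := by
  simp only [Complex.normSq_apply, Complex.mul_re, Complex.mul_im, Complex.sub_re,
    Complex.sub_im, Complex.one_re, Complex.one_im, Complex.conj_re, Complex.conj_im]
  ring

lemma denom_ne {z w : ℂ} (hz : ‖z‖ < 1) (hw : ‖w‖ < 1) :
    (1 - (starRingEnd ℂ) w * z) ≠ 0 := by
  intro h
  have h1 : (starRingEnd ℂ) w * z = 1 := by
    have := sub_eq_zero.mp h; exact this.symm
  have : ‖(starRingEnd ℂ) w * z‖ = 1 := by rw [h1]; simp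
  rw [norm_mul, Complex.norm_conj] at this
  nlinarith [norm_nonneg z, norm_nonneg w]

lemma normSq_lt_one {z : ℂ} (hz : ‖z‖ < 1) : Complex.normSq z < 1 := by
  rw [← Complex.sq_norm]
  nlinarith [norm_nonneg z]

lemma abs_num_lt {z w : ℂ} (hz : ‖z‖ < 1) (hw : ‖w‖ < 1) :
    ‖z - w‖ < ‖1 - (starRingEnd ℂ) w * z‖ := by
  rw [Complex.norm_def, Complex.norm_def]
  apply Real.sqrt_lt_sqrt (Complex.normSq_nonneg _)
  have := normSq_identity z w
  nlinarith [normSq_lt_one hz, normSq_lt_one hw]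

lemma pseudoDist_nonneg (z w : ℂ) : 0 ≤ pseudoDist z w := norm_nonneg _

lemma pseudoDist_lt_one {z w : ℂ} (hz : ‖z‖ < 1) (hw : ‖w‖ < 1) :
    pseudoDist z w < 1 := by
  unfold pseudoDist
  rw [norm_div]
  rw [div_lt_one (norm_pos_iff.mpr (denom_ne hz hw))]
  exact abs_num_lt hz hw

lemma pseudoDist_symm (z w : ℂ) : pseudoDist z w = pseudoDist w z := by
  unfold pseudoDist
  rw [norm_div, norm_div]
  congr 1
  · rw [← norm_neg]; ring_nf
  · rw [← Complex.norm_conj (1 - (starRingEnd ℂ) w * z)]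
    congr 1
    simp only [map_sub, map_one, map_mul, Complex.conj_conj]
    ring

lemma pseudoDist_zero_left (w : ℂ) : pseudoDist 0 w = ‖w‖ := by
  simp [pseudoDist]

lemma pseudoDist_zero_right (z : ℂ) : pseudoDist z 0 = ‖z‖ := by
  simp [pseudoDist]

lemma zero_case {u v : ℂ} (hu : ‖u‖ ≤ 1) (hv : ‖v‖ ≤ 1) :
    ‖u - v‖ * (1 + ‖u‖ * ‖v‖)
      ≤ (‖u‖ + ‖v‖) * ‖1 - (starRingEnd ℂ) v * u‖ := by
  set s := ‖u‖ with hs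
  set t := ‖v‖ with ht
  have hs0 : 0 ≤ s := norm_nonneg u
  have ht0 : 0 ≤ t := norm_nonneg v
  have hp : |(u * (starRingEnd ℂ) v).re| ≤ s * t := by
    calc |(u * (starRingEnd ℂ) v).re| ≤ ‖u * (starRingEnd ℂ) v‖ :=
      Complex.abs_re_le_norm _
    _ = s * t := by rw [norm_mul, Complex.norm_conj]
  set p := (u * (starRingEnd ℂ) v).re with hpd
  have h1 : Complex.normSq (u - v) = s ^ 2 + t ^ 2 - 2 * p := by
    rw [hs, ht, Complex.sq_norm, Complex.sq_norm, hpd]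
    simp only [Complex.normSq_apply, Complex.sub_re, Complex.sub_im, Complex.mul_re,
      Complex.mul_im, Complex.conj_re, Complex.conj_im]
    ring
  have h2 : Complex.normSq (1 - (starRingEnd ℂ) v * u) = 1 - 2 * p + s ^ 2 * t ^ 2 := by
    rw [hs, ht, Complex.sq_norm, Complex.sq_norm, hpd]
    simp only [Complex.normSq_apply, Complex.sub_re, Complex.sub_im, Complex.mul_re,
      Complex.mul_im, Complex.conj_re, Complex.conj_im, Complex.one_re, Complex.one_im]
    ring
  have hsq : (‖u - v‖ * (1 + s * t)) ^ 2
      ≤ ((s + t) * ‖1 - (starRingEnd ℂ) v * u‖) ^ 2 := by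
    rw [mul_pow, mul_pow, Complex.sq_norm, Complex.sq_norm, h1, h2]
    have hplb : -(s * t) ≤ p := (abs_le.mp hp).1
    nlinarith [mul_nonneg (mul_nonneg (sub_nonneg.mpr (by nlinarith : s ^ 2 ≤ 1))
      (sub_nonneg.mpr (by nlinarith : t ^ 2 ≤ 1))) (by linarith : (0:ℝ) ≤ p + s * t)]
  have hL : 0 ≤ ‖u - v‖ * (1 + s * t) := by positivity
  have hR : 0 ≤ (s + t) * ‖1 - (starRingEnd ℂ) v * u‖ := by positivity
  nlinarith [hsq]

lemma mobius_inv {x y z : ℂ} (hx : ‖x‖ < 1) (hy : ‖y‖ < 1)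
    (hz : ‖z‖ < 1) :
    pseudoDist ((x - y) / (1 - (starRingEnd ℂ) y * x))
      ((z - y) / (1 - (starRingEnd ℂ) y * z)) = pseudoDist x z := by
  set A := (x - y) / (1 - (starRingEnd ℂ) y * x) with hA
  set B := (z - y) / (1 - (starRingEnd ℂ) y * z) with hB
  have hd1 : (1 - (starRingEnd ℂ) y * x) ≠ 0 := denom_ne hx hy
  have hd2 : (1 - (starRingEnd ℂ) y * z) ≠ 0 := denom_ne hz hy
  have hd5 : (1 - (starRingEnd ℂ) z * x) ≠ 0 := denom_ne hx hz
  have hd3 : (1 - y * (starRingEnd ℂ) z) ≠ 0 := by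
    have := denom_ne (z := (starRingEnd ℂ) z) (w := (starRingEnd ℂ) y)
      (by rwa [Complex.norm_conj]) (by rwa [Complex.norm_conj])
    rwa [Complex.conj_conj] at this
  have hy2 : (1 - ((starRingEnd ℂ) y) * y) ≠ 0 := by
    rw [show (starRingEnd ℂ) y * y = (Complex.normSq y : ℂ) by
      rw [mul_comm, Complex.mul_conj]]
    intro h
    have : (Complex.normSq y : ℂ) = 1 := by linear_combination -h
    have h2 : (Complex.normSq y : ℝ) = 1 := by exact_mod_cast this
    have := normSq_lt_one hy; linarith
  have hBconj : (starRingEnd ℂ) B = ((starRingEnd ℂ) z - (starRingEnd ℂ) y)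
      / (1 - y * (starRingEnd ℂ) z) := by
    rw [hB, map_div₀]
    simp only [map_sub, map_one, map_mul, Complex.conj_conj]
  have hkey : (1 - (starRingEnd ℂ) B * A) * ((1 - y * (starRingEnd ℂ) z)
      * (1 - (starRingEnd ℂ) y * x))
      = (1 - ((starRingEnd ℂ) y) * y) * (1 - (starRingEnd ℂ) z * x) := by
    rw [hBconj, hA]
    have hd3' : 1 - (starRingEnd ℂ) z * y ≠ 0 := by rwa [mul_comm] at hd3
    field_simp
    ring
  have hBAne : (1 - (starRingEnd ℂ) B * A) ≠ 0 := by
    intro h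
    rw [h, zero_mul] at hkey
    exact (mul_ne_zero hy2 hd5) hkey.symm
  have hnum : (A - B) * ((1 - (starRingEnd ℂ) y * x) * (1 - (starRingEnd ℂ) y * z))
      = (x - z) * (1 - ((starRingEnd ℂ) y) * y) := by
    rw [hA, hB]
    have hd1' : 1 - x * (starRingEnd ℂ) y ≠ 0 := by rwa [mul_comm] at hd1
    field_simp
    ring
  have hfrac : (A - B) / (1 - (starRingEnd ℂ) B * A)
      = (x - z) * (1 - y * (starRingEnd ℂ) z)
        / ((1 - (starRingEnd ℂ) y * z) * (1 - (starRingEnd ℂ) z * x)) := by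
    rw [div_eq_div_iff hBAne (mul_ne_zero hd2 hd5)]
    apply mul_right_cancel₀ (mul_ne_zero hd1 hd3)
    linear_combination ((1 - (starRingEnd ℂ) z * x) * (1 - y * (starRingEnd ℂ) z)) * hnum
      - ((x - z) * (1 - y * (starRingEnd ℂ) z)) * hkey
  have habs : ‖1 - y * (starRingEnd ℂ) z‖
      = ‖1 - (starRingEnd ℂ) y * z‖ := by
    rw [← Complex.norm_conj (1 - (starRingEnd ℂ) y * z)]
    congr 1
    simp only [map_sub, map_one, map_mul, Complex.conj_conj]
  show ‖(A - B) / (1 - (starRingEnd ℂ) B * A)‖ = _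
  rw [hfrac, norm_div, norm_mul, norm_mul, habs]
  unfold pseudoDist
  rw [norm_div]
  have h2pos : ‖1 - (starRingEnd ℂ) y * z‖ ≠ 0 :=
    norm_ne_zero_iff.mpr hd2
  rw [mul_comm (‖x - z‖)]
  exact mul_div_mul_left _ _ h2pos

lemma pseudo_triangle {x y z : ℂ} (hx : ‖x‖ < 1) (hy : ‖y‖ < 1)
    (hz : ‖z‖ < 1) :
    pseudoDist x z * (1 + pseudoDist x y * pseudoDist y z)
      ≤ pseudoDist x y + pseudoDist y z := by
  set A := (x - y) / (1 - (starRingEnd ℂ) y * x) with hA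
  set B := (z - y) / (1 - (starRingEnd ℂ) y * z) with hB
  have hAabs : ‖A‖ = pseudoDist x y := rfl
  have hBabs : ‖B‖ = pseudoDist z y := rfl
  have hA1 : ‖A‖ < 1 := by rw [hAabs]; exact pseudoDist_lt_one hx hy
  have hB1 : ‖B‖ < 1 := by rw [hBabs]; exact pseudoDist_lt_one hz hy
  have hmob : pseudoDist A B = pseudoDist x z := mobius_inv hx hy hz
  have hzc := zero_case (le_of_lt hA1) (le_of_lt hB1)
  have hABden : ‖1 - (starRingEnd ℂ) B * A‖ ≠ 0 :=
    norm_ne_zero_iff.mpr (denom_ne hA1 hB1)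
  have hABdenpos : 0 < ‖1 - (starRingEnd ℂ) B * A‖ :=
    lt_of_le_of_ne (norm_nonneg _) (Ne.symm hABden)
  have hABnum : ‖A - B‖
      = pseudoDist A B * ‖1 - (starRingEnd ℂ) B * A‖ := by
    unfold pseudoDist
    rw [norm_div, div_mul_cancel₀ _ hABden]
  rw [hABnum, hAabs, hBabs] at hzc
  rw [← hmob, ← hAabs, ← hBabs] at *
  have hfac : 0 < 1 + ‖A‖ * ‖B‖ := by
    have := mul_nonneg (norm_nonneg A) (norm_nonneg B); linarith
  -- hzc : pd A B * absden * (1 + |A||B|) ≤ (|A| + |B|) * absden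
  have hzy : pseudoDist z y = ‖B‖ := rfl
  rw [pseudoDist_symm y z, hzy]
  nlinarith [pseudoDist_nonneg A B]

lemma ratio_mono {a b : ℝ} (ha : 0 ≤ a) (hab : a ≤ b) (hb : b < 1) :
    (1 + a) / (1 - a) ≤ (1 + b) / (1 - b) :=
  div_le_div₀ (by linarith) (by linarith) (by linarith) (by linarith)

lemma hypDist_symm (z w : ℂ) : hypDist z w = hypDist w z := by
  unfold hypDist; rw [pseudoDist_symm]

lemma hypDist_mono {z w z' w' : ℂ} (h : pseudoDist z w ≤ pseudoDist z' w')
    (h1 : pseudoDist z' w' < 1) : hypDist z w ≤ hypDist z' w' := by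
  unfold hypDist
  have h0 := pseudoDist_nonneg z w
  apply Real.log_le_log (div_pos (by linarith) (by linarith))
  exact ratio_mono h0 h h1

lemma hypDist_nonneg {z w : ℂ} (h1 : pseudoDist z w < 1) : 0 ≤ hypDist z w := by
  unfold hypDist
  apply Real.log_nonneg
  rw [le_div_iff₀ (by linarith [pseudoDist_nonneg z w])]
  linarith [pseudoDist_nonneg z w]

lemma hypDist_triangle {x y z : ℂ} (hx : ‖x‖ < 1) (hy : ‖y‖ < 1)
    (hz : ‖z‖ < 1) : hypDist x z ≤ hypDist x y + hypDist y z := by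
  have ht := pseudo_triangle hx hy hz
  set ρ := pseudoDist x z
  set ρ1 := pseudoDist x y
  set ρ2 := pseudoDist y z
  have hρ0 : 0 ≤ ρ := pseudoDist_nonneg x z
  have hρ1 : ρ < 1 := pseudoDist_lt_one hx hz
  have h10 : 0 ≤ ρ1 := pseudoDist_nonneg x y
  have h11 : ρ1 < 1 := pseudoDist_lt_one hx hy
  have h20 : 0 ≤ ρ2 := pseudoDist_nonneg y z
  have h21 : ρ2 < 1 := pseudoDist_lt_one hy hz
  unfold hypDist
  rw [← Real.log_mul (ne_of_gt (div_pos (by linarith) (by linarith)))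
    (ne_of_gt (div_pos (by linarith) (by linarith)))]
  apply Real.log_le_log (div_pos (by linarith) (by linarith))
  rw [div_mul_div_comm, div_le_div_iff₀ (by linarith) (mul_pos (by linarith) (by linarith))]
  nlinarith
lemma tanh_half (C : ℝ) : Real.tanh (C/2) = (Real.exp C - 1)/(Real.exp C + 1) := by
  have h : Real.exp (C/2) * Real.exp (C/2) = Real.exp C := by
    rw [← Real.exp_add]; ring_nf
  rw [Real.tanh_eq_sinh_div_cosh, Real.sinh_eq, Real.cosh_eq, Real.exp_neg, ← h]
  have hpos := Real.exp_pos (C/2)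
  have hne : Real.exp (C/2) ≠ 0 := ne_of_gt hpos
  have hne2 : Real.exp (C/2) * Real.exp (C/2) + 1 ≠ 0 := by positivity
  field_simp

/-- Let `f` be a finite Blaschke product of degree `D` with zeros `b₁,…,b_D` (a proper
holomorphic self-map of the unit disc of degree `D`), and let `K₂ ⊆ 𝔹` be a compact set of
hyperbolic diameter at most `C₁` with `0 ∈ K₂`.  Then any connected component `K₁` of
`f⁻¹(K₂)` (inside the disc) is contained in the union of the hyperbolic balls of radius
`C₂' = dist_𝔹(0, C₁'^{1/D})` centered at the zeros `bᵢ`, where `C₁' = tanh(C₁/2) < 1` is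
defined by `dist_𝔹(0, C₁') = C₁`; in particular `K₁` has hyperbolic diameter at most
`C₂ = 2·D·C₂'`. -/
theorem stmt4 (D : ℕ) (hD : 0 < D) (b : Fin D → ℂ) (hb : ∀ i, b i ∈ ball (0 : ℂ) 1)
    (f : ℂ → ℂ)
    (hf : ∀ x, f x = ∏ i, (x - b i) / (1 - (starRingEnd ℂ) (b i) * x))
    (C₁ : ℝ) (hC₁ : 0 ≤ C₁)
    (K₂ : Set ℂ) (hK₂c : IsCompact K₂) (hK₂b : K₂ ⊆ ball (0 : ℂ) 1)
    (h0 : (0 : ℂ) ∈ K₂)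
    (hdiam : ∀ z ∈ K₂, ∀ w ∈ K₂, hypDist z w ≤ C₁)
    (K₁ : Set ℂ) (x₀ : ℂ) (hx₀ : x₀ ∈ ball (0 : ℂ) 1 ∩ f ⁻¹' K₂)
    (hK₁ : K₁ = connectedComponentIn (ball (0 : ℂ) 1 ∩ f ⁻¹' K₂) x₀) :
    (∀ x ∈ K₁, ∃ i,
      hypDist x (b i) ≤ hypDist 0 ((Real.tanh (C₁ / 2) ^ ((1 : ℝ) / D) : ℝ) : ℂ)) ∧
    (∀ x ∈ K₁, ∀ y ∈ K₁,
      hypDist x y ≤ 2 * D * hypDist 0 ((Real.tanh (C₁ / 2) ^ ((1 : ℝ) / D) : ℝ) : ℂ)) := by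
  have hball : ∀ {z : ℂ}, z ∈ Metric.ball (0:ℂ) 1 → ‖z‖ < 1 := by
    intro z hz
    rwa [mem_ball_zero_iff] at hz
  set c := Real.tanh (C₁ / 2) with hc
  set r := c ^ ((1:ℝ)/(D:ℝ)) with hrdef
  have hcform : c = (Real.exp C₁ - 1)/(Real.exp C₁ + 1) := tanh_half C₁
  have hE1 : 1 ≤ Real.exp C₁ := Real.one_le_exp hC₁
  have hEpos : 0 < Real.exp C₁ + 1 := by linarith
  have hc0 : 0 ≤ c := by rw [hcform]; apply div_nonneg <;> linarith
  have hc1 : c < 1 := by rw [hcform, div_lt_one hEpos]; linarith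
  have hr0 : 0 ≤ r := Real.rpow_nonneg hc0 _
  have hDR : (0:ℝ) < (D:ℝ) := by exact_mod_cast hD
  have hr1 : r < 1 := Real.rpow_lt_one hc0 hc1 (by positivity)
  have hK₁sub : K₁ ⊆ Metric.ball (0:ℂ) 1 ∩ f ⁻¹' K₂ := by
    rw [hK₁]; exact connectedComponentIn_subset _ _
  have habi : ∀ i, ‖b i‖ < 1 := fun i => hball (hb i)
  -- core estimate
  have core : ∀ x ∈ K₁, ∃ i, pseudoDist x (b i) ≤ r := by
    intro x hx
    obtain ⟨hxb, hxf⟩ := hK₁sub hx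
    have hxa : ‖x‖ < 1 := hball hxb
    have hfx : f x ∈ K₂ := hxf
    have hfxa : ‖f x‖ < 1 := hball (hK₂b hfx)
    have habs : ‖f x‖ ≤ c := by
      have hd := hdiam (f x) hfx 0 h0
      set t := ‖f x‖ with htd
      have ht0 : 0 ≤ t := norm_nonneg _
      have hlog : Real.log ((1+t)/(1-t)) ≤ C₁ := by
        unfold hypDist at hd
        rwa [pseudoDist_zero_right] at hd
      have hratio : (1+t)/(1-t) ≤ Real.exp C₁ := by
        calc (1+t)/(1-t) = Real.exp (Real.log ((1+t)/(1-t))) := by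
              rw [Real.exp_log (by apply div_pos <;> linarith)]
        _ ≤ Real.exp C₁ := Real.exp_le_exp.mpr hlog
      rw [div_le_iff₀ (by linarith)] at hratio
      rw [hcform, le_div_iff₀ hEpos]
      nlinarith
    have hprod : ‖f x‖ = ∏ i, pseudoDist x (b i) := by
      rw [hf x, norm_prod]
      rfl
    by_contra hcon
    push_neg at hcon
    have hrD : r ^ D = c := by
      rw [hrdef, ← Real.rpow_natCast (c ^ ((1:ℝ)/(D:ℝ))) D, ← Real.rpow_mul hc0,
        one_div_mul_cancel (ne_of_gt hDR), Real.rpow_one]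
    rcases eq_or_lt_of_le hc0 with hceq | hcpos
    · have hfx0 : ‖f x‖ = 0 := le_antisymm (hceq ▸ habs) (norm_nonneg _)
      rw [hprod] at hfx0
      obtain ⟨i, _, hi⟩ := Finset.prod_eq_zero_iff.mp hfx0
      exact absurd (hi ▸ hr0 : pseudoDist x (b i) ≤ r) (not_le.mpr (hi ▸ hcon i))
    · have hrpos : 0 < r := Real.rpow_pos_of_pos hcpos _
      have hlt : ∏ _i : Fin D, r < ∏ i, pseudoDist x (b i) :=
        Finset.prod_lt_prod_of_nonempty (fun i _ => hrpos) (fun i _ => hcon i)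
          (@Finset.univ_nonempty (Fin D) _ (Fin.pos_iff_nonempty.mp hD))
      rw [Finset.prod_const, Finset.card_univ, Fintype.card_fin] at hlt
      rw [hrD] at hlt
      rw [hprod] at habs
      linarith
  -- translation to hypDist
  have hC2eq : pseudoDist 0 ((r:ℝ):ℂ) = r := by
    rw [pseudoDist_zero_left, Complex.norm_real, Real.norm_of_nonneg hr0]
  have hmono : ∀ (z : ℂ) (i : Fin D), pseudoDist z (b i) ≤ r →
      hypDist z (b i) ≤ hypDist 0 ((r:ℝ):ℂ) := by
    intro z i h
    exact hypDist_mono (by rw [hC2eq]; exact h) (by rw [hC2eq]; exact hr1)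
  have hC2'nonneg : 0 ≤ hypDist 0 ((r:ℝ):ℂ) :=
    hypDist_nonneg (by rw [hC2eq]; exact hr1)
  constructor
  · intro x hx
    obtain ⟨i, hi⟩ := core x hx
    exact ⟨i, hmono x i hi⟩
  -- part 2
  intro x hx y hy
  have hxa : ‖x‖ < 1 := hball (hK₁sub hx).1
  have hya : ‖y‖ < 1 := hball (hK₁sub hy).1
  obtain ⟨i₀, hi₀⟩ := core x hx
  set G : Fin D → Set ℂ :=
    fun i => {z | ‖z - b i‖ ≤ r * ‖1 - (starRingEnd ℂ) (b i) * z‖}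
    with hG
  have hGclosed : ∀ i, IsClosed (G i) := by
    intro i
    apply isClosed_le
    · exact continuous_norm.comp (continuous_id.sub continuous_const)
    · exact continuous_const.mul
        (continuous_norm.comp (continuous_const.sub (continuous_const.mul continuous_id)))
  have hGiff : ∀ (i : Fin D) (z : ℂ), ‖z‖ < 1 →
      (z ∈ G i ↔ pseudoDist z (b i) ≤ r) := by
    intro i z hz
    have hdpos : 0 < ‖1 - (starRingEnd ℂ) (b i) * z‖ :=
      norm_pos_iff.mpr (denom_ne hz (habi i))
    simp only [hG, Set.mem_setOf_eq, pseudoDist, norm_div]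
    rw [div_le_iff₀ hdpos]
  set R : Fin D → Fin D → Prop := fun j k => ∃ z, z ∈ K₁ ∧ z ∈ G j ∧ z ∈ G k with hR
  set T : Set (Fin D) := {k | Relation.ReflTransGen R i₀ k} with hT
  have hxG : x ∈ G i₀ := (hGiff i₀ x hxa).mpr hi₀
  have hconn : IsPreconnected K₁ := hK₁ ▸ isPreconnected_connectedComponentIn
  have h1closed : IsClosed (⋃ k ∈ T, G k) :=
    Set.Finite.isClosed_biUnion (Set.toFinite T) (fun i _ => hGclosed i)
  have h2closed : IsClosed (⋃ k ∈ Tᶜ, G k) :=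
    Set.Finite.isClosed_biUnion (Set.toFinite Tᶜ) (fun i _ => hGclosed i)
  have hcover : K₁ ⊆ (⋃ k ∈ T, G k) ∪ (⋃ k ∈ Tᶜ, G k) := by
    intro z hz
    obtain ⟨i, hi⟩ := core z hz
    have hzG : z ∈ G i := (hGiff i z (hball (hK₁sub hz).1)).mpr hi
    by_cases hiT : i ∈ T
    · exact Or.inl (Set.mem_biUnion hiT hzG)
    · exact Or.inr (Set.mem_biUnion hiT hzG)
  have hne1 : (K₁ ∩ ⋃ k ∈ T, G k).Nonempty :=
    ⟨x, hx, Set.mem_biUnion (Relation.ReflTransGen.refl) hxG⟩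
  have hempty2 : ¬ (K₁ ∩ ⋃ k ∈ Tᶜ, G k).Nonempty := by
    intro hne2
    obtain ⟨z, hzK, hzt⟩ := (isPreconnected_closed_iff.mp hconn) _ _
      h1closed h2closed hcover hne1 hne2
    obtain ⟨hzt1, hzt2⟩ := hzt
    obtain ⟨j, hjT, hzGj⟩ := Set.mem_iUnion₂.mp hzt1
    obtain ⟨k, hkT, hzGk⟩ := Set.mem_iUnion₂.mp hzt2
    exact hkT (Relation.ReflTransGen.tail hjT ⟨z, hzK, hzGj, hzGk⟩)
  have hyt1 : y ∈ ⋃ k ∈ T, G k := by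
    rcases hcover hy with h | h
    · exact h
    · exact absurd ⟨y, hy, h⟩ hempty2
  obtain ⟨j, hjT, hyGj⟩ := Set.mem_iUnion₂.mp hyt1
  -- chain bound
  have hchain : ∀ i j, Relation.ReflTransGen R i j → pseudoDist x (b i) ≤ r →
      ∃ s : Finset (Fin D), j ∈ s ∧
        ∀ k ∈ s, hypDist x (b k) ≤ (2 * (s.card : ℝ) - 1) * hypDist 0 ((r:ℝ):ℂ) := by
    intro i j hj
    induction hj with
    | refl =>
      intro hi
      refine ⟨{_}, Finset.mem_singleton_self _, ?_⟩
      intro m hm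
      rw [Finset.mem_singleton] at hm
      subst hm
      rw [Finset.card_singleton]
      have := hmono x _ hi
      push_cast
      linarith
    | @tail jm k h1 h2 ih =>
      intro hi
      obtain ⟨s, hjm, hs⟩ := ih hi
      by_cases hks : k ∈ s
      · exact ⟨s, hks, hs⟩
      · refine ⟨insert k s, Finset.mem_insert_self _ _, ?_⟩
        obtain ⟨z, hzK, hzGjm, hzGk⟩ := h2
        have hza : ‖z‖ < 1 := hball (hK₁sub hzK).1
        have hz1 : hypDist z (b jm) ≤ hypDist 0 ((r:ℝ):ℂ) :=
          hmono z jm ((hGiff jm z hza).mp hzGjm)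
        have hz2 : hypDist z (b k) ≤ hypDist 0 ((r:ℝ):ℂ) :=
          hmono z k ((hGiff k z hza).mp hzGk)
        have hxbjm : hypDist x (b jm) ≤ (2 * (s.card : ℝ) - 1) * hypDist 0 ((r:ℝ):ℂ) :=
          hs jm hjm
        have t1 : hypDist x (b k) ≤ hypDist x (b jm) + hypDist (b jm) (b k) :=
          hypDist_triangle hxa (habi jm) (habi k)
        have t2 : hypDist (b jm) (b k) ≤ hypDist (b jm) z + hypDist z (b k) :=
          hypDist_triangle (habi jm) hza (habi k)
        have t3 : hypDist (b jm) z = hypDist z (b jm) := hypDist_symm _ _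
        intro m hm
        rw [Finset.card_insert_of_notMem hks]
        rcases Finset.mem_insert.mp hm with rfl | hm
        · push_cast
          nlinarith
        · have := hs m hm
          push_cast
          nlinarith
  obtain ⟨s, hjs, hs⟩ := hchain i₀ j hjT hi₀
  have hbj := hs j hjs
  have hcard : (s.card : ℝ) ≤ (D : ℝ) := by
    have := Finset.card_le_univ s
    rw [Fintype.card_fin] at this
    exact_mod_cast this
  have tri1 : hypDist x y ≤ hypDist x (b j) + hypDist (b j) y :=
    hypDist_triangle hxa (habi j) hya
  have hby : hypDist (b j) y ≤ hypDist 0 ((r:ℝ):ℂ) := by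
    rw [hypDist_symm]
    exact hmono y j ((hGiff j y hya).mp hyGj)
  nlinarith
end

section
/- A geometric limit of generalized spheres in ℝ^d is a generalized sphere: if (S_n) is a sequence of generalized spheres (each either a Euclidean sphere or the union of an affine hyperplane with {∞}) in ℝ^d ∪ {∞} converging in the Hausdorff metric (on the one-point compactification) to a nonempty closed set S containing more than one point, then S is contained in a generalized sphere. -/
open Metric Filter ENNReal

set_option maxHeartbeats 1000000

/-- A geometric limit of generalized spheres is a generalized sphere.  Under the
stereographic identification of `ℝ^d ∪ {∞}` with the unit sphere `S^d ⊆ ℝ^{d+1}`, a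
generalized sphere is the intersection of `S^d` with an affine hyperplane
`{y | φ y = c}` (`φ ≠ 0`).  If the nonempty sets `S_n = S^d ∩ {y | φₙ y = cₙ}` converge
in the Hausdorff metric to a nonempty closed set `S ⊆ S^d` with more than one point, then
`S` is contained in a generalized sphere. -/
theorem stmt12 {d : ℕ}
    (φ : ℕ → (EuclideanSpace ℝ (Fin (d + 1)) →L[ℝ] ℝ)) (c : ℕ → ℝ)
    (hφ : ∀ n, φ n ≠ 0)
    (hne : ∀ n, (sphere (0 : EuclideanSpace ℝ (Fin (d + 1))) 1 ∩ {y | φ n y = c n}).Nonempty)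
    (S : Set (EuclideanSpace ℝ (Fin (d + 1))))
    (hSclosed : IsClosed S)
    (hSsub : S ⊆ sphere (0 : EuclideanSpace ℝ (Fin (d + 1))) 1)
    (hS2 : ∃ x ∈ S, ∃ y ∈ S, x ≠ y)
    (hconv : Tendsto
      (fun n => EMetric.hausdorffEdist
        (sphere (0 : EuclideanSpace ℝ (Fin (d + 1))) 1 ∩ {y | φ n y = c n}) S)
      atTop (nhds 0)) :
    ∃ (ψ : EuclideanSpace ℝ (Fin (d + 1)) →L[ℝ] ℝ) (b : ℝ), ψ ≠ 0 ∧
      S ⊆ sphere (0 : EuclideanSpace ℝ (Fin (d + 1))) 1 ∩ {y | ψ y = b} := by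
  classical
  set T : ℕ → Set (EuclideanSpace ℝ (Fin (d + 1))) :=
    fun n => sphere (0 : EuclideanSpace ℝ (Fin (d + 1))) 1 ∩ {y | φ n y = c n} with hT
  set ψn : ℕ → (EuclideanSpace ℝ (Fin (d + 1)) →L[ℝ] ℝ) := fun n => ‖φ n‖⁻¹ • φ n with hψn
  set bn : ℕ → ℝ := fun n => ‖φ n‖⁻¹ * c n with hbn
  have hφnorm : ∀ n, ‖φ n‖ ≠ 0 := fun n => norm_ne_zero_iff.2 (hφ n)
  have hψnorm : ∀ n, ‖ψn n‖ = 1 := by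
    intro n
    show ‖‖φ n‖⁻¹ • φ n‖ = 1
    rw [norm_smul _ (φ n), norm_inv, norm_norm, inv_mul_cancel₀ (hφnorm n)]
  have hval : ∀ n, ∀ y ∈ T n, ψn n y = bn n := by
    intro n y hy
    have h : φ n y = c n := hy.2
    show (‖φ n‖⁻¹ • φ n) y = ‖φ n‖⁻¹ * c n
    rw [ContinuousLinearMap.smul_apply, smul_eq_mul, h]
  have hbbound : ∀ n, |bn n| ≤ 1 := by
    intro n
    obtain ⟨w, hw⟩ := hne n
    have hwn : ‖w‖ = 1 := mem_sphere_zero_iff_norm.1 hw.1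
    calc |bn n| = |ψn n w| := by rw [hval n w hw]
      _ ≤ ‖ψn n‖ * ‖w‖ := (ψn n).le_opNorm w
      _ = 1 := by rw [hψnorm n, hwn, one_mul]
  have hbound : ∀ n, (ψn n, bn n) ∈
      Metric.closedBall (0 : (EuclideanSpace ℝ (Fin (d + 1)) →L[ℝ] ℝ) × ℝ) 1 := by
    intro n
    rw [Metric.mem_closedBall, dist_zero_right, Prod.norm_def]
    simp only [Real.norm_eq_abs]
    exact max_le (le_of_eq (hψnorm n)) (hbbound n)
  obtain ⟨⟨ψ, b⟩, -, g, hg, hgt⟩ :=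
    tendsto_subseq_of_bounded Metric.isBounded_closedBall hbound
  have hψlim : Tendsto (fun k => ψn (g k)) atTop (nhds ψ) :=
    (continuous_fst.tendsto _).comp hgt
  have hblim : Tendsto (fun k => bn (g k)) atTop (nhds b) :=
    (continuous_snd.tendsto _).comp hgt
  have hψ1 : ‖ψ‖ = 1 := by
    have h1 : Tendsto (fun k => ‖ψn (g k)‖) atTop (nhds ‖ψ‖) := hψlim.norm
    have h2 : Tendsto (fun k => ‖ψn (g k)‖) atTop (nhds 1) := by
      simp only [hψnorm]; exact tendsto_const_nhds
    exact tendsto_nhds_unique h1 h2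
  refine ⟨ψ, b, by simpa using fun h => by simp [h] at hψ1, fun x hx => ⟨hSsub hx, ?_⟩⟩
  have hsel : ∀ n, ∃ y ∈ T n,
      edist x y < EMetric.hausdorffEdist (T n) S + ((n : ℝ≥0∞) + 1)⁻¹ := by
    intro n
    have hfin : EMetric.infEdist x (T n) ≠ ⊤ := Metric.infEdist_ne_top (hne n)
    have hle : EMetric.infEdist x (T n) ≤ EMetric.hausdorffEdist (T n) S := by
      calc EMetric.infEdist x (T n)
          ≤ EMetric.infEdist x S + EMetric.hausdorffEdist S (T n) :=
            EMetric.infEdist_le_infEdist_add_hausdorffEdist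
        _ = EMetric.hausdorffEdist (T n) S := by
            simp only [EMetric.infEdist, EMetric.hausdorffEdist]
            rw [Metric.infEDist_zero_of_mem hx, zero_add, Metric.hausdorffEDist_comm]
    have hlt : EMetric.infEdist x (T n) <
        EMetric.hausdorffEdist (T n) S + ((n : ℝ≥0∞) + 1)⁻¹ := by
      calc EMetric.infEdist x (T n)
          < EMetric.infEdist x (T n) + ((n : ℝ≥0∞) + 1)⁻¹ :=
            ENNReal.lt_add_right hfin (by simp)
        _ ≤ _ := add_le_add_left hle _
    exact EMetric.infEdist_lt_iff.1 hlt
  choose y hyT hyd using hsel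
  have hylim : Tendsto (fun k => y (g k)) atTop (nhds x) := by
    have h2 : Tendsto (fun n : ℕ => ((n : ℝ≥0∞) + 1)⁻¹) atTop (nhds 0) := by
      have := ENNReal.tendsto_inv_nat_nhds_zero.comp (tendsto_add_atTop_nat 1)
      simpa [Function.comp_def] using this
    have hub : Tendsto (fun n => EMetric.hausdorffEdist (T n) S + ((n : ℝ≥0∞) + 1)⁻¹)
        atTop (nhds 0) := by
      simpa using hconv.add h2
    have hed : Tendsto (fun n => edist x (y n)) atTop (nhds 0) :=
      tendsto_of_tendsto_of_tendsto_of_le_of_le tendsto_const_nhds hub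
        (fun n => zero_le) (fun n => (hyd n).le)
    have hedg : Tendsto (fun k => edist x (y (g k))) atTop (nhds 0) :=
      hed.comp hg.tendsto_atTop
    rw [tendsto_iff_dist_tendsto_zero]
    have h3 := (ENNReal.tendsto_toReal (by simp : (0 : ℝ≥0∞) ≠ ⊤)).comp hedg
    simpa [Function.comp_def, dist_edist, edist_comm] using h3
  have h1 : Tendsto (fun k => ψn (g k) (y (g k))) atTop (nhds (ψ x)) := by
    have hpair : Tendsto (fun k => (ψn (g k), y (g k))) atTop (nhds (ψ, x)) :=
      hψlim.prodMk_nhds hylim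
    exact (isBoundedBilinearMap_apply.continuous.tendsto (ψ, x)).comp hpair
  have h2 : Tendsto (fun k => ψn (g k) (y (g k))) atTop (nhds b) := by
    have heq : (fun k => ψn (g k) (y (g k))) = fun k => bn (g k) := by
      funext k; exact hval (g k) _ (hyT (g k))
    rw [heq]; exact hblim
  exact tendsto_nhds_unique h1 h2
end

section
/- Let S be a symbolically irreducible conformal GDMS in ℝ^d with d ≥ 3 such that every finite subsystem S_n of an exhausting increasing sequence has all of its local limit sets J_{S_n,v} contained in a generalized sphere. Then for every vertex v, the local limit set J_{S,v} is contained in a generalized sphere. -/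
open Metric

/-- A generalized sphere in `ℝ^d`: either a Euclidean sphere, or (the finite part of) a
hyperplane together with `∞`, i.e. an affine hyperplane `{y | φ y = b}` with `φ ≠ 0`. -/
def IsGenSphere {d : ℕ} (s : Set (EuclideanSpace ℝ (Fin d))) : Prop :=
  (∃ (c : EuclideanSpace ℝ (Fin d)) (r : ℝ), 0 < r ∧ s = sphere c r) ∨
  (∃ (φ : EuclideanSpace ℝ (Fin d) →L[ℝ] ℝ) (b : ℝ), φ ≠ 0 ∧ s = {y | φ y = b})

open RealInnerProductSpace

/-- The linear functional `(t, y, w) ↦ a * t + ⟪u, y⟫ + b * w` on `ℝ × E × ℝ`. -/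
noncomputable def triFun {d : ℕ} (a : ℝ) (u : EuclideanSpace ℝ (Fin d)) (b : ℝ) :
    (ℝ × EuclideanSpace ℝ (Fin d) × ℝ) →ₗ[ℝ] ℝ where
  toFun p := a * p.1 + ⟪u, p.2.1⟫ + b * p.2.2
  map_add' p q := by
    simp only [Prod.fst_add, Prod.snd_add, inner_add_right]
    ring
  map_smul' t p := by
    simp only [Prod.smul_fst, Prod.smul_snd, smul_eq_mul, real_inner_smul_right,
      RingHom.id_apply]
    ring

@[simp] lemma triFun_apply {d : ℕ} (a : ℝ) (u : EuclideanSpace ℝ (Fin d)) (b : ℝ)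
    (p : ℝ × EuclideanSpace ℝ (Fin d) × ℝ) :
    triFun a u b p = a * p.1 + ⟪u, p.2.1⟫ + b * p.2.2 := rfl

/-- Any generalized sphere is contained in the zero set of a nonzero linear functional
evaluated on the "lift" `x ↦ (‖x‖², x, 1)`. -/
lemma gensphere_fun {d : ℕ} {s : Set (EuclideanSpace ℝ (Fin d))} (hs : IsGenSphere s) :
    ∃ f : (ℝ × EuclideanSpace ℝ (Fin d) × ℝ) →ₗ[ℝ] ℝ,
      f ≠ 0 ∧ ∀ x ∈ s, f (‖x‖ ^ 2, x, 1) = 0 := by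
  rcases hs with ⟨c, r, hr, rfl⟩ | ⟨φ, b, hφ, rfl⟩
  · refine ⟨triFun 1 ((-2 : ℝ) • c) (‖c‖ ^ 2 - r ^ 2), ?_, ?_⟩
    · intro h
      have h1 : triFun 1 ((-2 : ℝ) • c) (‖c‖ ^ 2 - r ^ 2)
          ((1 : ℝ), (0 : EuclideanSpace ℝ (Fin d)), (0 : ℝ)) = 0 := by rw [h]; rfl
      rw [triFun_apply, inner_zero_right] at h1
      norm_num at h1
    · intro x hx
      have hx' : ‖x - c‖ = r := by
        simpa [dist_eq_norm] using hx
      have h2 : ‖x - c‖ ^ 2 = r ^ 2 := by rw [hx']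
      rw [norm_sub_sq_real] at h2
      rw [triFun_apply, real_inner_smul_left, real_inner_comm]
      dsimp only
      linarith
  · set u := (InnerProductSpace.toDual ℝ (EuclideanSpace ℝ (Fin d))).symm φ with hu
    have hux : ∀ x, ⟪u, x⟫ = φ x := fun x => InnerProductSpace.toDual_symm_apply
    refine ⟨triFun 0 u (-b), ?_, ?_⟩
    · intro h
      obtain ⟨y, hy⟩ : ∃ y, φ y ≠ 0 := by
        by_contra hc; push_neg at hc
        exact hφ (ContinuousLinearMap.ext fun y => by simp [hc y])
      have h1 : triFun 0 u (-b) ((0 : ℝ), y, (0 : ℝ)) = 0 := by rw [h]; rfl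
      rw [triFun_apply, hux y] at h1
      dsimp only at h1
      apply hy
      linarith
    · intro x hx
      have hx' : φ x = b := hx
      rw [triFun_apply, hux x, hx']
      ring

/-- If a set is annihilated (through the lift `x ↦ (‖x‖², x, 1)`) by a nonzero linear
functional, then it is contained in a generalized sphere. -/
lemma subset_gensphere_of_fun {d : ℕ} (hd : 0 < d) (U : Set (EuclideanSpace ℝ (Fin d)))
    (h : ∃ f : (ℝ × EuclideanSpace ℝ (Fin d) × ℝ) →ₗ[ℝ] ℝ,
      f ≠ 0 ∧ ∀ x ∈ U, f (‖x‖ ^ 2, x, 1) = 0) :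
    ∃ s, IsGenSphere s ∧ U ⊆ s := by
  classical
  obtain ⟨f, hf0, hfU⟩ := h
  set a : ℝ := f ((1 : ℝ), (0 : EuclideanSpace ℝ (Fin d)), (0 : ℝ)) with ha_def
  set b : ℝ := f ((0 : ℝ), (0 : EuclideanSpace ℝ (Fin d)), (1 : ℝ)) with hb_def
  set g : EuclideanSpace ℝ (Fin d) →ₗ[ℝ] ℝ :=
    f.comp ((LinearMap.inr ℝ ℝ (EuclideanSpace ℝ (Fin d) × ℝ)).comp
      (LinearMap.inl ℝ (EuclideanSpace ℝ (Fin d)) ℝ)) with hg_def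
  have hgapp : ∀ y : EuclideanSpace ℝ (Fin d), g y = f ((0 : ℝ), y, (0 : ℝ)) := fun y => rfl
  have hdecomp : ∀ (t : ℝ) (y : EuclideanSpace ℝ (Fin d)) (w : ℝ),
      f (t, y, w) = a * t + g y + b * w := by
    intro t y w
    have hsplit : (t, y, w) = t • ((1 : ℝ), (0 : EuclideanSpace ℝ (Fin d)), (0 : ℝ))
        + ((0 : ℝ), y, (0 : ℝ))
        + w • ((0 : ℝ), (0 : EuclideanSpace ℝ (Fin d)), (1 : ℝ)) := by
      simp [Prod.ext_iff]
    rw [hsplit, map_add, map_add, map_smul, map_smul, smul_eq_mul, smul_eq_mul, hgapp,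
      ← ha_def, ← hb_def]
    ring
  set φ : EuclideanSpace ℝ (Fin d) →L[ℝ] ℝ := LinearMap.toContinuousLinearMap g with hφ_def
  set u : EuclideanSpace ℝ (Fin d) := (InnerProductSpace.toDual ℝ _).symm φ with hu_def
  have hφg : ∀ y, φ y = g y := fun y => rfl
  have hux : ∀ y : EuclideanSpace ℝ (Fin d), ⟪u, y⟫ = g y := by
    intro y
    rw [← hφg]
    exact InnerProductSpace.toDual_symm_apply
  have heq : ∀ x ∈ U, a * ‖x‖ ^ 2 + ⟪u, x⟫ + b = 0 := by
    intro x hx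
    have h1 := hfU x hx
    rw [hdecomp] at h1
    rw [hux]
    linarith
  by_cases ha : a = 0
  · by_cases hφ0 : φ = 0
    · -- degenerate: U must be empty
      have hg0 : ∀ y : EuclideanSpace ℝ (Fin d), g y = 0 := by
        intro y
        rw [← hφg, hφ0]
        rfl
      have hb : b ≠ 0 := by
        intro hb
        apply hf0
        apply LinearMap.ext
        rintro ⟨t, y, w⟩
        rw [hdecomp, hg0, ha, hb]
        simp
      have hU : U = ∅ := by
        ext x
        simp only [Set.mem_empty_iff_false, iff_false]
        intro hx
        have h1 := heq x hx
        rw [hux, hg0, ha] at h1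
        apply hb
        linarith
      exact ⟨sphere 0 1, Or.inl ⟨0, 1, one_pos, rfl⟩, by simp [hU]⟩
    · -- hyperplane
      refine ⟨{y | φ y = -b}, Or.inr ⟨φ, -b, hφ0, rfl⟩, ?_⟩
      intro x hx
      have h1 := heq x hx
      rw [ha] at h1
      have h2 : ⟪u, x⟫ = -b := by linarith
      show φ x = -b
      rw [hφg, ← hux, h2]
  · -- sphere (possibly degenerate)
    set c : EuclideanSpace ℝ (Fin d) := (-(2 * a)⁻¹) • u with hc_def
    have hRx : ∀ x ∈ U, ‖x - c‖ ^ 2 = ‖c‖ ^ 2 - b / a := by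
      intro x hx
      have h1 := heq x hx
      have h2 : ⟪x, u⟫ = -(a * ‖x‖ ^ 2) - b := by
        rw [real_inner_comm]; linarith
      rw [norm_sub_sq_real, hc_def, real_inner_smul_right, h2]
      field_simp
      ring
    by_cases hR : 0 < ‖c‖ ^ 2 - b / a
    · refine ⟨sphere c (Real.sqrt (‖c‖ ^ 2 - b / a)),
        Or.inl ⟨c, _, Real.sqrt_pos.mpr hR, rfl⟩, ?_⟩
      intro x hx
      have h1 := hRx x hx
      have h3 : ‖x - c‖ = Real.sqrt (‖c‖ ^ 2 - b / a) := by
        rw [← h1, Real.sqrt_sq (norm_nonneg _)]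
      simpa [dist_eq_norm] using h3
    · -- U ⊆ {c}
      push_neg at hR
      refine ⟨sphere (c + EuclideanSpace.single (⟨0, hd⟩ : Fin d) (1 : ℝ)) 1,
        Or.inl ⟨_, 1, one_pos, rfl⟩, ?_⟩
      intro x hx
      have h1 := hRx x hx
      have h2 : ‖x - c‖ ^ 2 = 0 := le_antisymm (h1 ▸ hR) (sq_nonneg _)
      have h3 : x = c := by
        have h4 : ‖x - c‖ = 0 := sq_eq_zero_iff.mp h2
        rw [norm_eq_zero, sub_eq_zero] at h4
        exact h4
      show dist x (c + EuclideanSpace.single (⟨0, hd⟩ : Fin d) (1 : ℝ)) = 1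
      rw [h3, dist_eq_norm]
      have : c - (c + EuclideanSpace.single (⟨0, hd⟩ : Fin d) (1 : ℝ))
          = -EuclideanSpace.single (⟨0, hd⟩ : Fin d) (1 : ℝ) := by abel
      rw [this, norm_neg, EuclideanSpace.norm_single]
      norm_num

/-- Let `S` be a symbolically irreducible conformal GDMS in `ℝ^d`, `d ≥ 3`, exhausted by an
increasing sequence of finite subsystems `S_n` whose local limit sets `J_{S_n,v}` are each
contained in a generalized sphere.  Since `J_{S,v} ⊆ closure (⋃ n, J_{S_n,v})`, every local
limit set `J_{S,v}` of `S` is contained in a generalized sphere. -/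
theorem stmt14 {d : ℕ} (hd : 3 ≤ d) {V : Type*}
    (Jloc : V → Set (EuclideanSpace ℝ (Fin d)))
    (Jn : ℕ → V → Set (EuclideanSpace ℝ (Fin d)))
    (hmono : ∀ v, Monotone (fun n => Jn n v))
    (hclos : ∀ v, Jloc v ⊆ closure (⋃ n, Jn n v))
    (hsph : ∀ n v, ∃ s, IsGenSphere s ∧ Jn n v ⊆ s) :
    ∀ v, ∃ s, IsGenSphere s ∧ Jloc v ⊆ s := by
  intro v
  set m : EuclideanSpace ℝ (Fin d) → ℝ × EuclideanSpace ℝ (Fin d) × ℝ :=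
    fun x => (‖x‖ ^ 2, x, 1) with hm_def
  set p : ℕ →o Submodule ℝ (ℝ × EuclideanSpace ℝ (Fin d) × ℝ) :=
    ⟨fun n => Submodule.span ℝ (m '' Jn n v),
      fun i j hij => Submodule.span_mono (Set.image_mono (hmono v hij))⟩ with hp_def
  have hpn : ∀ n, p n = Submodule.span ℝ (m '' Jn n v) := fun n => rfl
  have hne : ∀ n, p n ≠ ⊤ := by
    intro n hn
    obtain ⟨s, hs, hJs⟩ := hsph n v
    obtain ⟨f, hf0, hfs⟩ := gensphere_fun hs
    have hle : p n ≤ LinearMap.ker f := by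
      rw [hpn]
      apply Submodule.span_le.mpr
      rintro _ ⟨x, hx, rfl⟩
      exact hfs x (hJs hx)
    rw [hn, top_le_iff] at hle
    exact hf0 (LinearMap.ker_eq_top.mp hle)
  obtain ⟨N, hN⟩ := monotone_stabilizes_iff_noetherian.mpr inferInstance p
  have hsup : (⨆ n, p n) = p N := by
    apply le_antisymm
    · apply iSup_le
      intro n
      rcases le_total n N with h | h
      · exact p.monotone h
      · exact (hN n h).ge
    · exact le_iSup _ N
  have hlt : (⨆ n, p n) < ⊤ := hsup ▸ (hne N).lt_top
  obtain ⟨f, hf0, hfbot⟩ := Submodule.exists_dual_map_eq_bot_of_lt_top hlt inferInstance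
  have hfU : ∀ x ∈ ⋃ n, Jn n v, f (‖x‖ ^ 2, x, 1) = 0 := by
    intro x hx
    obtain ⟨_, ⟨n, rfl⟩, hn⟩ := hx
    have hmem : m x ∈ ⨆ k, p k :=
      le_iSup p n (hpn n ▸ Submodule.subset_span ⟨x, hn, rfl⟩)
    have hmem2 : f (m x) ∈ Submodule.map f (⨆ k, p k) := ⟨m x, hmem, rfl⟩
    rw [hfbot] at hmem2
    simpa [hm_def] using hmem2
  obtain ⟨s, hs, hUs⟩ :=
    subset_gensphere_of_fun (by omega) (⋃ n, Jn n v) ⟨f, hf0, hfU⟩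
  have hc : IsClosed s := by
    rcases hs with ⟨c, r, hr, rfl⟩ | ⟨φ, b, hφ, rfl⟩
    · exact isClosed_sphere
    · exact isClosed_eq φ.continuous continuous_const
  exact ⟨s, hs, (hclos v).trans (closure_minimal hUs hc)⟩
end
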